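/- arXiv:1708.00738 — 5 statements merged into one kernel-verified Lean document; each statement's English description precedes it below -/
import Mathlib

section
/- (Bihari's inequality) Let k : [0,∞) → [0,∞) be continuous, M ∈ ℝ, and g : [0,∞) → [0,∞) continuous, nondecreasing, with G(u) = ∫₀^u ds/g(s) well defined. If y is continuous and y(t) ≤ M + ∫₀^t k(s) g(y(s)) ds for all t ≥ 0, then G(y(t)) ≤ G(M) + ∫₀^t k(s) ds for all t ≥ 0. -/
open MeasureTheory Real intervalIntegral

/-- Bihari's inequality. -/
theorem bihari_inequality (k g y G : ℝ → ℝ) (M : ℝ)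
    (hk : Continuous k) (hk0 : ∀ t, 0 ≤ k t)
    (hg : Continuous g) (hg0 : ∀ u, 0 ≤ g u) (hgmono : Monotone g)
    (hGdef : ∀ u, G u = ∫ s in (0:ℝ)..u, 1 / g s)
    (hGint : ∀ u : ℝ, IntervalIntegrable (fun s => 1 / g s) volume 0 u)
    (hy : Continuous y) (hy0 : ∀ t, 0 ≤ y t)
    (hineq : ∀ t ≥ (0:ℝ), y t ≤ M + ∫ s in (0:ℝ)..t, k s * g (y s)) :
    ∀ t ≥ (0:ℝ), G (y t) ≤ G M + ∫ s in (0:ℝ)..t, k s := by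
  -- the auxiliary function z
  set z : ℝ → ℝ := fun t => M + ∫ s in (0:ℝ)..t, k s * g (y s) with hz_def
  have hcont_int : Continuous fun s => k s * g (y s) := hk.mul (hg.comp hy)
  have hGint' : ∀ a b : ℝ, IntervalIntegrable (fun s => 1 / g s) volume a b :=
    fun a b => (hGint a).symm.trans (hGint b)
  have hz_deriv : ∀ t : ℝ, HasDerivAt z (k t * g (y t)) t := by
    intro t
    have := (intervalIntegral.integral_hasDerivAt_right
      (hcont_int.intervalIntegrable 0 t)
      (hcont_int.stronglyMeasurableAtFilter _ _)
      hcont_int.continuousAt)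
    exact this.const_add M
  have hz_cont : Continuous z :=
    continuous_const.add (intervalIntegral.continuous_primitive
      (fun a b => hcont_int.intervalIntegrable a b) 0)
  have hz_mono : Monotone z := by
    intro a b hab
    have h1 : z b - z a = ∫ s in a..b, k s * g (y s) := by
      simp only [hz_def, add_sub_add_left_eq_sub]
      rw [intervalIntegral.integral_interval_sub_left
        (hcont_int.intervalIntegrable 0 b) (hcont_int.intervalIntegrable 0 a)]
    have h2 : 0 ≤ ∫ s in a..b, k s * g (y s) :=
      intervalIntegral.integral_nonneg hab (fun s _ => mul_nonneg (hk0 s) (hg0 _))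
    linarith
  have hz0 : z 0 = M := by simp [hz_def]
  have hyz : ∀ t ≥ (0:ℝ), y t ≤ z t := hineq
  -- G is continuous
  have hG_eq : G = fun u => ∫ s in (0:ℝ)..u, 1 / g s := funext hGdef
  have hG_cont : Continuous G := by
    rw [hG_eq]; exact intervalIntegral.continuous_primitive hGint' 0
  -- G is monotone
  have hG_mono : Monotone G := by
    intro u v huv
    rw [hGdef, hGdef]
    have hsplit : (∫ s in (0:ℝ)..v, 1 / g s)
        = (∫ s in (0:ℝ)..u, 1 / g s) + ∫ s in u..v, 1 / g s :=
      (intervalIntegral.integral_add_adjacent_intervals (hGint u) (hGint' u v)).symm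
    have hpos : 0 ≤ ∫ s in u..v, 1 / g s :=
      intervalIntegral.integral_nonneg huv (fun s _ => one_div_nonneg.2 (hg0 s))
    linarith
  -- derivative of G at points where g is nonzero
  have hG_deriv : ∀ u : ℝ, g u ≠ 0 → HasDerivAt G (1 / g u) u := by
    intro u hu
    rw [hG_eq]
    exact intervalIntegral.integral_hasDerivAt_right (hGint u)
      ((measurable_const.div hg.measurable).stronglyMeasurable.stronglyMeasurableAtFilter)
      (continuousAt_const.div hg.continuousAt hu)
  -- main argument
  intro t ht
  -- find t0 with z t0 = M and g∘z positive on (t0, t)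
  obtain ⟨t0, ht0mem, hzt0, hposz⟩ :
      ∃ t0, t0 ∈ Set.Icc 0 t ∧ z t0 = M ∧ ∀ x ∈ Set.Ioo t0 t, 0 < g (z x) := by
    by_cases hS : ∃ s ∈ Set.Icc (0:ℝ) t, g (z s) = 0
    · set S : Set ℝ := Set.Icc 0 t ∩ {s | g (z s) = 0} with hS_def
      have hSne : S.Nonempty := by obtain ⟨s, hs1, hs2⟩ := hS; exact ⟨s, hs1, hs2⟩
      have hScomp : IsCompact S :=
        isCompact_Icc.inter_right (isClosed_eq (hg.comp hz_cont) continuous_const)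
      have ht0S : sSup S ∈ S := hScomp.sSup_mem hSne
      refine ⟨sSup S, ht0S.1, ?_, ?_⟩
      · -- z (sSup S) = M : the integrand vanishes on [0, sSup S]
        have hzero : ∀ s ∈ Set.Icc (0:ℝ) (sSup S), k s * g (y s) = 0 := by
          intro s hs
          have h1 : g (y s) ≤ g (z s) := hgmono (hyz s hs.1)
          have h2 : g (z s) ≤ g (z (sSup S)) := hgmono (hz_mono hs.2)
          have h3 : g (z (sSup S)) = 0 := ht0S.2
          have : g (y s) = 0 := le_antisymm (by linarith) (hg0 _)
          rw [this, mul_zero]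
        have : (∫ s in (0:ℝ)..(sSup S), k s * g (y s)) = 0 := by
          rw [intervalIntegral.integral_congr (g := fun _ => (0:ℝ))
            (fun s hs => hzero s (by rwa [Set.uIcc_of_le ht0S.1.1] at hs))]
          simp
        simp [hz_def, this]
      · intro x hx
        rcases lt_or_eq_of_le (hg0 (z x)) with h | h
        · exact h
        · exfalso
          have hxS : x ∈ S := ⟨⟨le_trans ht0S.1.1 hx.1.le, hx.2.le⟩, h.symm⟩
          exact absurd (le_csSup hScomp.bddAbove hxS) (not_le.2 hx.1)
    · push_neg at hS
      refine ⟨0, ⟨le_refl 0, ht⟩, hz0, ?_⟩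
      intro x hx
      exact lt_of_le_of_ne (hg0 _) (Ne.symm (hS x ⟨hx.1.le, hx.2.le⟩))
  have ht00 : (0:ℝ) ≤ t0 := ht0mem.1
  have ht0t : t0 ≤ t := ht0mem.2
  -- the function w is monotone on [t0, t]
  set w : ℝ → ℝ := fun s => (∫ u in (0:ℝ)..s, k u) - G (z s) with hw_def
  have hK_cont : Continuous fun s => ∫ u in (0:ℝ)..s, k u :=
    intervalIntegral.continuous_primitive (fun a b => hk.intervalIntegrable a b) 0
  have hw_cont : Continuous w := hK_cont.sub (hG_cont.comp hz_cont)
  have hw_deriv : ∀ x ∈ Set.Ioo t0 t,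
      HasDerivAt w (k x - 1 / g (z x) * (k x * g (y x))) x := by
    intro x hx
    have h1 : HasDerivAt (fun s => ∫ u in (0:ℝ)..s, k u) (k x) x :=
      intervalIntegral.integral_hasDerivAt_right (hk.intervalIntegrable 0 x)
        (hk.stronglyMeasurableAtFilter _ _) hk.continuousAt
    have h2 : HasDerivAt (fun s => G (z s)) (1 / g (z x) * (k x * g (y x))) x :=
      (hG_deriv (z x) (ne_of_gt (hposz x hx))).comp x (hz_deriv x)
    exact h1.sub h2
  have hw_mono : MonotoneOn w (Set.Icc t0 t) := by
    apply monotoneOn_of_deriv_nonneg (convex_Icc t0 t) hw_cont.continuousOn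
    · intro x hx
      rw [interior_Icc] at hx
      exact (hw_deriv x hx).differentiableAt.differentiableWithinAt
    · intro x hx
      rw [interior_Icc] at hx
      rw [(hw_deriv x hx).deriv]
      have hgz : 0 < g (z x) := hposz x hx
      have hx0 : (0:ℝ) ≤ x := le_trans ht00 hx.1.le
      have hgy : g (y x) ≤ g (z x) := hgmono (hyz x hx0)
      have : 1 / g (z x) * (k x * g (y x)) ≤ 1 / g (z x) * (k x * g (z x)) := by
        apply mul_le_mul_of_nonneg_left _ (one_div_nonneg.2 hgz.le)
        exact mul_le_mul_of_nonneg_left hgy (hk0 x)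
      have heq : 1 / g (z x) * (k x * g (z x)) = k x := by
        field_simp
      linarith
  have hwle : w t0 ≤ w t :=
    hw_mono (Set.left_mem_Icc.2 ht0t) (Set.right_mem_Icc.2 ht0t) ht0t
  -- conclude
  have hK0 : 0 ≤ ∫ u in (0:ℝ)..t0, k u :=
    intervalIntegral.integral_nonneg ht00 (fun s _ => hk0 s)
  have hfinal : G (z t) ≤ G M + ∫ u in (0:ℝ)..t, k u := by
    have : (∫ u in (0:ℝ)..t0, k u) - G M ≤ (∫ u in (0:ℝ)..t, k u) - G (z t) := by
      simpa [hw_def, hzt0] using hwle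
    linarith
  have hGy : G (y t) ≤ G (z t) := hG_mono (hyz t ht)
  linarith
end

section
/- Let u be a C² solution of u_{tt} − Δu + b(t)u_t + m²(t)u = 0 with b(t) = μ₁/(1+t), m²(t) = μ₂²/(1+t)², and let ψ(t,x) = μ₁|x|²/(2(1+t)²). Then with E_{ψ,u}(t) := (1/2)∫_{ℝⁿ} e^{2ψ(t,x)}(u_t² + |∇u|² + m²(t)u²) dx one has the pointwise identity: e^{2ψ}u_t(u_{tt} − Δu + b u_t + m² u) = ∂_t[(e^{2ψ}/2)(u_t² + |∇u|² + m² u²)] − div(e^{2ψ}u_t ∇u) + (e^{2ψ}/ψ_t)u_t²(|∇ψ|² + b ψ_t) − (e^{2ψ}/ψ_t)|u_t∇ψ − ψ_t∇u|² − ψ_t e^{2ψ}(u_t² + m² u²) − (1/2)e^{2ψ}u² (d/dt)m²(t). -/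
open MeasureTheory Real

section helpers
variable {E : Type*} [NormedAddCommGroup E] [NormedSpace ℝ E]

lemma slice_t {F : ℝ × E → ℝ} (hF : Differentiable ℝ F) (t : ℝ) (x : E) :
    HasDerivAt (fun s => F (s, x)) (fderiv ℝ F (t, x) (1, 0)) t := by
  have h := (hF (t, x)).hasFDerivAt.comp_hasDerivAt t
    ((hasDerivAt_id t).prodMk (hasDerivAt_const t x))
  exact h

lemma slice_x {F : ℝ × E → ℝ} (hF : Differentiable ℝ F) (t : ℝ) (x : E) :
    HasFDerivAt (fun y => F (t, y))
      ((fderiv ℝ F (t, x)).comp ((0 : E →L[ℝ] ℝ).prod (ContinuousLinearMap.id ℝ E))) x := by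
  have h := (hF (t, x)).hasFDerivAt.comp x
    ((hasFDerivAt_const t x).prodMk (hasFDerivAt_id x))
  exact h

lemma slice_x_fderiv {F : ℝ × E → ℝ} (hF : Differentiable ℝ F) (t : ℝ) (x : E) (v : E) :
    fderiv ℝ (fun y => F (t, y)) x v = fderiv ℝ F (t, x) (0, v) := by
  rw [(slice_x hF t x).fderiv]; simp

lemma fderiv_apply_hasFDerivAt {F : ℝ × E → ℝ} (hF : ContDiff ℝ 2 F) (p : ℝ × E) (w : ℝ × E) :
    HasFDerivAt (fun q => fderiv ℝ F q w)
      ((fderiv ℝ (fderiv ℝ F) p).flip w) p := by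
  have hF' : ContDiff ℝ 1 (fderiv ℝ F) := hF.fderiv_right (by norm_num)
  have hd := ((hF'.differentiable (by norm_num)) p).hasFDerivAt
  have h := hd.clm_apply (hasFDerivAt_const w p)
  simpa using h

lemma mixed_t {F : ℝ × E → ℝ} (hF : ContDiff ℝ 2 F) (t : ℝ) (x : E) (w : ℝ × E) :
    HasDerivAt (fun s => fderiv ℝ F (s, x) w)
      (fderiv ℝ (fderiv ℝ F) (t, x) (1, 0) w) t := by
  have h := (fderiv_apply_hasFDerivAt hF (t, x) w).comp_hasDerivAt t
    ((hasDerivAt_id t).prodMk (hasDerivAt_const t x))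
  exact h

lemma mixed_x {F : ℝ × E → ℝ} (hF : ContDiff ℝ 2 F) (t : ℝ) (x : E) (w : ℝ × E) :
    HasFDerivAt (fun y => fderiv ℝ F (t, y) w)
      (((fderiv ℝ (fderiv ℝ F) (t, x)).flip w).comp
        ((0 : E →L[ℝ] ℝ).prod (ContinuousLinearMap.id ℝ E))) x := by
  have h := (fderiv_apply_hasFDerivAt hF (t, x) w).comp x
    ((hasFDerivAt_const t x).prodMk (hasFDerivAt_id x))
  exact h

lemma mixed_x_apply {F : ℝ × E → ℝ} (hF : ContDiff ℝ 2 F) (t : ℝ) (x : E) (w : ℝ × E) (v : E) :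
    fderiv ℝ (fun y => fderiv ℝ F (t, y) w) x v
      = fderiv ℝ (fderiv ℝ F) (t, x) (0, v) w := by
  rw [(mixed_x hF t x w).fderiv]; simp

lemma symm2 {F : ℝ × E → ℝ} (hF : ContDiff ℝ 2 F) (p a b : ℝ × E) :
    fderiv ℝ (fderiv ℝ F) p a b = fderiv ℝ (fderiv ℝ F) p b a :=
  (hF.contDiffAt.isSymmSndFDerivAt (by simp)) a b

end helpers

section euc
variable {n : ℕ}

lemma enorm_sq (v : EuclideanSpace ℝ (Fin n)) : ‖v‖ ^ 2 = ∑ i, v i ^ 2 := by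
  rw [← real_inner_self_eq_norm_sq, PiLp.inner_apply]
  exact Finset.sum_congr rfl fun i _ => by simp [RCLike.inner_apply, sq]

lemma grad_comp (g : EuclideanSpace ℝ (Fin n) → ℝ) (y : EuclideanSpace ℝ (Fin n)) (i : Fin n) :
    gradient g y i = fderiv ℝ g y (EuclideanSpace.single i 1) := by
  have h : (inner ℝ (gradient g y) (EuclideanSpace.single i 1) : ℝ) = gradient g y i := by
    rw [EuclideanSpace.inner_single_right]; simp
  rw [← h, gradient, InnerProductSpace.toDual_symm_apply]

end euc

-- given defs
noncomputable def psi (μ₁ : ℝ) (n : ℕ) (t : ℝ) (x : EuclideanSpace ℝ (Fin n)) : ℝ :=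
  μ₁ * ‖x‖ ^ 2 / (2 * (1 + t) ^ 2)

noncomputable def lap {n : ℕ} (f : EuclideanSpace ℝ (Fin n) → ℝ)
    (x : EuclideanSpace ℝ (Fin n)) : ℝ :=
  ∑ i : Fin n, fderiv ℝ (fun y => fderiv ℝ f y (EuclideanSpace.single i 1)) x
    (EuclideanSpace.single i 1)

noncomputable def divg {n : ℕ} (V : EuclideanSpace ℝ (Fin n) → EuclideanSpace ℝ (Fin n))
    (x : EuclideanSpace ℝ (Fin n)) : ℝ :=
  ∑ i : Fin n, fderiv ℝ (fun y => V y i) x (EuclideanSpace.single i 1)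

noncomputable def ut {n : ℕ} (u : ℝ → EuclideanSpace ℝ (Fin n) → ℝ) (t : ℝ)
    (x : EuclideanSpace ℝ (Fin n)) : ℝ :=
  deriv (fun s => u s x) t

set_option maxHeartbeats 3000000 in
/-- fundamental pointwise energy identity for the scale-invariant
wave equation with damping and mass. -/
theorem energy_identity (n : ℕ) (hn : 1 ≤ n) (μ₁ μ₂sq : ℝ) (hμ₁ : 0 < μ₁) (hμ₂ : 0 ≤ μ₂sq)
    (u : ℝ → EuclideanSpace ℝ (Fin n) → ℝ)
    (hu : ContDiff ℝ 2 (fun q : ℝ × EuclideanSpace ℝ (Fin n) => u q.1 q.2))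
    (hsol : ∀ t ≥ (0:ℝ), ∀ x,
      deriv (fun s => ut u s x) t - lap (u t) x + (μ₁ / (1 + t)) * ut u t x
        + (μ₂sq / (1 + t) ^ 2) * u t x = 0) :
    ∀ t ≥ (0:ℝ), ∀ x : EuclideanSpace ℝ (Fin n), x ≠ 0 →
      Real.exp (2 * psi μ₁ n t x) * ut u t x *
          (deriv (fun s => ut u s x) t - lap (u t) x + (μ₁ / (1 + t)) * ut u t x
            + (μ₂sq / (1 + t) ^ 2) * u t x)
        =
      deriv (fun s => Real.exp (2 * psi μ₁ n s x) / 2 *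
          ((ut u s x) ^ 2 + ‖gradient (u s) x‖ ^ 2 + (μ₂sq / (1 + s) ^ 2) * (u s x) ^ 2)) t
        - divg (fun y => (Real.exp (2 * psi μ₁ n t y) * ut u t y) • gradient (u t) y) x
        + Real.exp (2 * psi μ₁ n t x) / deriv (fun s => psi μ₁ n s x) t * (ut u t x) ^ 2 *
            (‖gradient (psi μ₁ n t) x‖ ^ 2 + (μ₁ / (1 + t)) * deriv (fun s => psi μ₁ n s x) t)
        - Real.exp (2 * psi μ₁ n t x) / deriv (fun s => psi μ₁ n s x) t *
            ‖ut u t x • gradient (psi μ₁ n t) x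
              - deriv (fun s => psi μ₁ n s x) t • gradient (u t) x‖ ^ 2
        - deriv (fun s => psi μ₁ n s x) t * Real.exp (2 * psi μ₁ n t x) *
            ((ut u t x) ^ 2 + (μ₂sq / (1 + t) ^ 2) * (u t x) ^ 2)
        - 1 / 2 * Real.exp (2 * psi μ₁ n t x) * (u t x) ^ 2 *
            deriv (fun s => μ₂sq / (1 + s) ^ 2) t := by
  intro t ht x hx
  have h1t : (0:ℝ) < 1 + t := by linarith
  have h1t' : (1:ℝ) + t ≠ 0 := ne_of_gt h1t
  set F : ℝ × EuclideanSpace ℝ (Fin n) → ℝ := fun q => u q.1 q.2 with hFdef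
  have hFd : Differentiable ℝ F := hu.differentiable (by norm_num)
  have h1 : ∀ (s : ℝ) (y : EuclideanSpace ℝ (Fin n)),
      ut u s y = fderiv ℝ F (s, y) (1, 0) := fun s y => (slice_t hFd s y).deriv
  have h2 : ∀ (s : ℝ) (y v : EuclideanSpace ℝ (Fin n)),
      fderiv ℝ (u s) y v = fderiv ℝ F (s, y) (0, v) := fun s y v => slice_x_fderiv hFd s y v
  -- time derivative of psi
  have hψd : HasDerivAt (fun s => psi μ₁ n s x) (-(μ₁ * ‖x‖ ^ 2) / (1 + t) ^ 3) t := by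
    have hA : HasDerivAt (fun s : ℝ => 1 + s) 1 t := by
      simpa using (hasDerivAt_id t).const_add 1
    have hden : HasDerivAt (fun s : ℝ => 2 * (1 + s) ^ 2) (2 * (2 * (1 + t) ^ 1 * 1)) t :=
      (hA.pow 2).const_mul 2
    have hden_ne : 2 * (1 + t) ^ 2 ≠ 0 := by positivity
    have h := (hasDerivAt_const t (μ₁ * ‖x‖ ^ 2)).div hden hden_ne
    refine h.congr_deriv ?_
    field_simp
    ring
  have hψne : (-(μ₁ * ‖x‖ ^ 2) / (1 + t) ^ 3) ≠ 0 := by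
    have hxn : (0:ℝ) < ‖x‖ ^ 2 := pow_pos (norm_pos_iff.mpr hx) 2
    have hpos : 0 < μ₁ * ‖x‖ ^ 2 := mul_pos hμ₁ hxn
    have h3 : (0:ℝ) < (1 + t) ^ 3 := by positivity
    intro hcon
    rcases div_eq_zero_iff.mp hcon with h | h
    · linarith
    · exact absurd h (ne_of_gt h3)
  -- time derivative of m²
  have hm2d : HasDerivAt (fun s : ℝ => μ₂sq / (1 + s) ^ 2) (-(2 * μ₂sq) / (1 + t) ^ 3) t := by
    have hA : HasDerivAt (fun s : ℝ => 1 + s) 1 t := by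
      simpa using (hasDerivAt_id t).const_add 1
    have hden : HasDerivAt (fun s : ℝ => (1 + s) ^ 2) (2 * (1 + t) ^ 1 * 1) t := hA.pow 2
    have hden_ne : (1 + t) ^ 2 ≠ 0 := by positivity
    have h := (hasDerivAt_const t μ₂sq).div hden hden_ne
    refine h.congr_deriv ?_
    field_simp
    ring
  -- spatial differentiability of psi
  have hψdiff : DifferentiableAt ℝ (psi μ₁ n t) x := by
    have hpsieq : psi μ₁ n t = fun y : EuclideanSpace ℝ (Fin n) =>
        μ₁ / (2 * (1 + t) ^ 2) * (inner ℝ y y : ℝ) := by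
      funext y; rw [psi, real_inner_self_eq_norm_sq]; ring
    rw [hpsieq]
    have hinner : DifferentiableAt ℝ (fun y : EuclideanSpace ℝ (Fin n) => (inner ℝ y y : ℝ)) x :=
      differentiableAt_id.inner ℝ differentiableAt_id
    exact hinner.const_mul _
  have hψx : HasFDerivAt (psi μ₁ n t) (fderiv ℝ (psi μ₁ n t) x) x := hψdiff.hasFDerivAt
  -- gradient components
  have hgpsi : ∀ i : Fin n, gradient (psi μ₁ n t) x i = fderiv ℝ (psi μ₁ n t) x (EuclideanSpace.single i 1) :=
    fun i => grad_comp _ _ _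
  have hgu : ∀ (s : ℝ) (i : Fin n),
      gradient (u s) x i = fderiv ℝ F (s, x) (0, EuclideanSpace.single i 1) := by
    intro s i; rw [grad_comp, h2]
  -- norm reductions
  have hnormpsi : ‖gradient (psi μ₁ n t) x‖ ^ 2 = (∑ i, fderiv ℝ (psi μ₁ n t) x (EuclideanSpace.single i 1) ^ 2) := by
    rw [enorm_sq]; exact Finset.sum_congr rfl fun i _ => by rw [hgpsi]
  have hnormu : ∀ s : ℝ,
      ‖gradient (u s) x‖ ^ 2 = ∑ i, fderiv ℝ F (s, x) (0, EuclideanSpace.single i 1) ^ 2 := by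
    intro s; rw [enorm_sq]; exact Finset.sum_congr rfl fun i _ => by rw [hgu]
  -- Laplacian
  have hlap : lap (u t) x = (∑ i, fderiv ℝ (fderiv ℝ F) (t, x) (0, EuclideanSpace.single i 1) (0, EuclideanSpace.single i 1)) := by
    rw [lap]
    refine Finset.sum_congr rfl fun i _ => ?_
    have hfe : (fun y => fderiv ℝ (u t) y (EuclideanSpace.single i 1))
        = fun y => fderiv ℝ F (t, y) (0, EuclideanSpace.single i 1) := by
      funext y; rw [h2]
    rw [hfe, mixed_x_apply hu t x]
  -- time-derivative of the energy density
  have hρeq : (fun s => Real.exp (2 * psi μ₁ n s x) / 2 *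
          ((ut u s x) ^ 2 + ‖gradient (u s) x‖ ^ 2 + (μ₂sq / (1 + s) ^ 2) * (u s x) ^ 2))
      = fun s => Real.exp (2 * psi μ₁ n s x) / 2 *
          ((fderiv ℝ F (s, x) (1, 0)) ^ 2
            + (∑ i, fderiv ℝ F (s, x) (0, EuclideanSpace.single i 1) ^ 2)
            + (μ₂sq / (1 + s) ^ 2) * (F (s, x)) ^ 2) := by
    funext s
    rw [h1, hnormu]
  have hexpt : HasDerivAt (fun s => Real.exp (2 * psi μ₁ n s x))
      (Real.exp (2 * psi μ₁ n t x) * (2 * (-(μ₁ * ‖x‖ ^ 2) / (1 + t) ^ 3))) t := (hψd.const_mul 2).exp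
  have hρd : HasDerivAt (fun s => Real.exp (2 * psi μ₁ n s x) / 2 *
          ((fderiv ℝ F (s, x) (1, 0)) ^ 2
            + (∑ i, fderiv ℝ F (s, x) (0, EuclideanSpace.single i 1) ^ 2)
            + (μ₂sq / (1 + s) ^ 2) * (F (s, x)) ^ 2))
      (Real.exp (2 * psi μ₁ n t x) * (2 * (-(μ₁ * ‖x‖ ^ 2) / (1 + t) ^ 3)) / 2 * ((fderiv ℝ F (t, x) (1, 0)) ^ 2 + (∑ i, fderiv ℝ F (t, x) (0, EuclideanSpace.single i 1) ^ 2) + (μ₂sq / (1 + t) ^ 2) * (u t x) ^ 2)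
        + Real.exp (2 * psi μ₁ n t x) / 2 * ((2 * fderiv ℝ F (t, x) (1, 0) * fderiv ℝ (fderiv ℝ F) (t, x) (1, 0) (1, 0) + 2 * (∑ i, fderiv ℝ F (t, x) (0, EuclideanSpace.single i 1) * fderiv ℝ (fderiv ℝ F) (t, x) (1, 0) (0, EuclideanSpace.single i 1)))
            + ((-(2 * μ₂sq) / (1 + t) ^ 3) * (u t x) ^ 2 + (μ₂sq / (1 + t) ^ 2) * (2 * u t x * fderiv ℝ F (t, x) (1, 0))))) t := by
    have hsum : HasDerivAt (fun s => ∑ i, fderiv ℝ F (s, x) (0, EuclideanSpace.single i 1) ^ 2)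
        (∑ i : Fin n, (2:ℕ) * fderiv ℝ F (t, x) (0, EuclideanSpace.single i 1) ^ (2-1)
          * fderiv ℝ (fderiv ℝ F) (t, x) (1, 0) (0, EuclideanSpace.single i 1)) t :=
      HasDerivAt.fun_sum fun i _ => (mixed_t hu t x (0, EuclideanSpace.single i 1)).fun_pow 2
    have h := (hexpt.div_const 2).fun_mul
      ((((mixed_t hu t x (1, 0)).fun_pow 2).fun_add hsum).fun_add
        (hm2d.fun_mul ((slice_t hFd t x).fun_pow 2)))
    refine h.congr_deriv ?_
    have hs2 : (∑ i : Fin n, (2:ℕ) * fderiv ℝ F (t, x) (0, EuclideanSpace.single i 1) ^ (2-1)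
          * fderiv ℝ (fderiv ℝ F) (t, x) (1, 0) (0, EuclideanSpace.single i 1)) = 2 * (∑ i, fderiv ℝ F (t, x) (0, EuclideanSpace.single i 1) * fderiv ℝ (fderiv ℝ F) (t, x) (1, 0) (0, EuclideanSpace.single i 1)) := by
      rw [Finset.mul_sum]
      exact Finset.sum_congr rfl fun i _ => by push_cast; ring
    rw [hs2]
    push_cast
    ring
  -- divergence term
  have hVi : ∀ i : Fin n, (fun y => ((Real.exp (2 * psi μ₁ n t y) * ut u t y) • gradient (u t) y) i)
      = fun y => Real.exp (2 * psi μ₁ n t y) * fderiv ℝ F (t, y) (1, 0)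
          * fderiv ℝ F (t, y) (0, EuclideanSpace.single i 1) := by
    intro i; funext y
    have : gradient (u t) y i = fderiv ℝ F (t, y) (0, EuclideanSpace.single i 1) := by
      rw [grad_comp, h2]
    simp only [PiLp.smul_apply, smul_eq_mul, this, h1, mul_assoc]
  have hexp_y : HasFDerivAt (fun y => Real.exp (2 * psi μ₁ n t y))
      (Real.exp (2 * psi μ₁ n t x) • ((2:ℝ) • fderiv ℝ (psi μ₁ n t) x)) x :=
    (hψx.const_mul 2).exp
  have hfd : ∀ i : Fin n,
      fderiv ℝ (fun y => Real.exp (2 * psi μ₁ n t y) * fderiv ℝ F (t, y) (1, 0)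
          * fderiv ℝ F (t, y) (0, EuclideanSpace.single i 1)) x (EuclideanSpace.single i 1)
        = Real.exp (2 * psi μ₁ n t x) * (2 * fderiv ℝ (psi μ₁ n t) x (EuclideanSpace.single i 1)) * fderiv ℝ F (t, x) (1, 0) * fderiv ℝ F (t, x) (0, EuclideanSpace.single i 1) + Real.exp (2 * psi μ₁ n t x) * fderiv ℝ (fderiv ℝ F) (t, x) (1, 0) (0, EuclideanSpace.single i 1) * fderiv ℝ F (t, x) (0, EuclideanSpace.single i 1)
          + Real.exp (2 * psi μ₁ n t x) * fderiv ℝ F (t, x) (1, 0) * fderiv ℝ (fderiv ℝ F) (t, x) (0, EuclideanSpace.single i 1) (0, EuclideanSpace.single i 1) := by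
    intro i
    have hprod := (hexp_y.fun_mul (mixed_x hu t x (1, 0))).fun_mul
      (mixed_x hu t x (0, EuclideanSpace.single i 1))
    rw [hprod.fderiv]
    have hsymm := symm2 hu (t, x) ((0 : ℝ), EuclideanSpace.single i 1) ((1:ℝ), (0 : EuclideanSpace ℝ (Fin n)))
    simp [ContinuousLinearMap.add_apply, ContinuousLinearMap.smul_apply,
      ContinuousLinearMap.comp_apply, ContinuousLinearMap.flip_apply, hsymm]
    ring
  have hdiv : divg (fun y => (Real.exp (2 * psi μ₁ n t y) * ut u t y) • gradient (u t) y) x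
      = 2 * Real.exp (2 * psi μ₁ n t x) * fderiv ℝ F (t, x) (1, 0) * (∑ i, fderiv ℝ (psi μ₁ n t) x (EuclideanSpace.single i 1) * fderiv ℝ F (t, x) (0, EuclideanSpace.single i 1)) + Real.exp (2 * psi μ₁ n t x) * (∑ i, fderiv ℝ F (t, x) (0, EuclideanSpace.single i 1) * fderiv ℝ (fderiv ℝ F) (t, x) (1, 0) (0, EuclideanSpace.single i 1)) + Real.exp (2 * psi μ₁ n t x) * fderiv ℝ F (t, x) (1, 0) * (∑ i, fderiv ℝ (fderiv ℝ F) (t, x) (0, EuclideanSpace.single i 1) (0, EuclideanSpace.single i 1)) := by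
    rw [divg]
    have : ∀ i : Fin n, fderiv ℝ
        (fun y => ((Real.exp (2 * psi μ₁ n t y) * ut u t y) • gradient (u t) y) i) x
        (EuclideanSpace.single i 1)
        = Real.exp (2 * psi μ₁ n t x) * (2 * fderiv ℝ (psi μ₁ n t) x (EuclideanSpace.single i 1)) * fderiv ℝ F (t, x) (1, 0) * fderiv ℝ F (t, x) (0, EuclideanSpace.single i 1) + Real.exp (2 * psi μ₁ n t x) * fderiv ℝ (fderiv ℝ F) (t, x) (1, 0) (0, EuclideanSpace.single i 1) * fderiv ℝ F (t, x) (0, EuclideanSpace.single i 1)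
          + Real.exp (2 * psi μ₁ n t x) * fderiv ℝ F (t, x) (1, 0) * fderiv ℝ (fderiv ℝ F) (t, x) (0, EuclideanSpace.single i 1) (0, EuclideanSpace.single i 1) := by
      intro i; rw [hVi i]; exact hfd i
    rw [Finset.sum_congr rfl fun i _ => this i]
    have hre : ∀ i : Fin n,
        Real.exp (2 * psi μ₁ n t x) * (2 * fderiv ℝ (psi μ₁ n t) x (EuclideanSpace.single i 1)) * fderiv ℝ F (t, x) (1, 0) * fderiv ℝ F (t, x) (0, EuclideanSpace.single i 1) + Real.exp (2 * psi μ₁ n t x) * fderiv ℝ (fderiv ℝ F) (t, x) (1, 0) (0, EuclideanSpace.single i 1) * fderiv ℝ F (t, x) (0, EuclideanSpace.single i 1)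
          + Real.exp (2 * psi μ₁ n t x) * fderiv ℝ F (t, x) (1, 0) * fderiv ℝ (fderiv ℝ F) (t, x) (0, EuclideanSpace.single i 1) (0, EuclideanSpace.single i 1)
        = 2 * Real.exp (2 * psi μ₁ n t x) * fderiv ℝ F (t, x) (1, 0) * (fderiv ℝ (psi μ₁ n t) x (EuclideanSpace.single i 1) * fderiv ℝ F (t, x) (0, EuclideanSpace.single i 1)) + Real.exp (2 * psi μ₁ n t x) * (fderiv ℝ F (t, x) (0, EuclideanSpace.single i 1) * fderiv ℝ (fderiv ℝ F) (t, x) (1, 0) (0, EuclideanSpace.single i 1))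
          + Real.exp (2 * psi μ₁ n t x) * fderiv ℝ F (t, x) (1, 0) * fderiv ℝ (fderiv ℝ F) (t, x) (0, EuclideanSpace.single i 1) (0, EuclideanSpace.single i 1) := fun i => by ring
    rw [Finset.sum_congr rfl fun i _ => hre i]
    rw [Finset.sum_add_distrib, Finset.sum_add_distrib, ← Finset.mul_sum, ← Finset.mul_sum,
      ← Finset.mul_sum]
  -- combination norm
  have hcombnorm : ‖fderiv ℝ F (t, x) (1, 0) • gradient (psi μ₁ n t) x - (-(μ₁ * ‖x‖ ^ 2) / (1 + t) ^ 3) • gradient (u t) x‖ ^ 2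
      = (fderiv ℝ F (t, x) (1, 0)) ^ 2 * (∑ i, fderiv ℝ (psi μ₁ n t) x (EuclideanSpace.single i 1) ^ 2) - 2 * fderiv ℝ F (t, x) (1, 0) * (-(μ₁ * ‖x‖ ^ 2) / (1 + t) ^ 3) * (∑ i, fderiv ℝ (psi μ₁ n t) x (EuclideanSpace.single i 1) * fderiv ℝ F (t, x) (0, EuclideanSpace.single i 1)) + (-(μ₁ * ‖x‖ ^ 2) / (1 + t) ^ 3) ^ 2 * (∑ i, fderiv ℝ F (t, x) (0, EuclideanSpace.single i 1) ^ 2) := by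
    rw [enorm_sq]
    have hc : ∀ i : Fin n, (fderiv ℝ F (t, x) (1, 0) • gradient (psi μ₁ n t) x - (-(μ₁ * ‖x‖ ^ 2) / (1 + t) ^ 3) • gradient (u t) x) i
        = fderiv ℝ F (t, x) (1, 0) * fderiv ℝ (psi μ₁ n t) x (EuclideanSpace.single i 1) - (-(μ₁ * ‖x‖ ^ 2) / (1 + t) ^ 3) * fderiv ℝ F (t, x) (0, EuclideanSpace.single i 1) := by
      intro i
      simp only [PiLp.sub_apply, PiLp.smul_apply, smul_eq_mul]
      rw [hgpsi i, hgu t i]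
    rw [Finset.sum_congr rfl fun i _ => by rw [hc i]]
    have : ∀ i : Fin n, (fderiv ℝ F (t, x) (1, 0) * fderiv ℝ (psi μ₁ n t) x (EuclideanSpace.single i 1) - (-(μ₁ * ‖x‖ ^ 2) / (1 + t) ^ 3) * fderiv ℝ F (t, x) (0, EuclideanSpace.single i 1)) ^ 2
        = (fderiv ℝ F (t, x) (1, 0)) ^ 2 * fderiv ℝ (psi μ₁ n t) x (EuclideanSpace.single i 1) ^ 2 - 2 * fderiv ℝ F (t, x) (1, 0) * (-(μ₁ * ‖x‖ ^ 2) / (1 + t) ^ 3) * (fderiv ℝ (psi μ₁ n t) x (EuclideanSpace.single i 1) * fderiv ℝ F (t, x) (0, EuclideanSpace.single i 1))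
          + (-(μ₁ * ‖x‖ ^ 2) / (1 + t) ^ 3) ^ 2 * fderiv ℝ F (t, x) (0, EuclideanSpace.single i 1) ^ 2 := fun i => by ring
    rw [Finset.sum_congr rfl fun i _ => this i]
    rw [Finset.sum_add_distrib, Finset.sum_sub_distrib, ← Finset.mul_sum, ← Finset.mul_sum,
      ← Finset.mul_sum]
  -- deriv of ut in t
  have hP' : deriv (fun s => ut u s x) t = fderiv ℝ (fderiv ℝ F) (t, x) (1, 0) (1, 0) := by
    have hfe : (fun s => ut u s x) = fun s => fderiv ℝ F (s, x) (1, 0) :=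
      funext fun s => h1 s x
    rw [hfe]; exact (mixed_t hu t x (1, 0)).deriv
  -- now rewrite the goal
  rw [hρeq, hρd.deriv, hdiv, hψd.deriv, hm2d.deriv, hP', hlap, hnormpsi, h1 t x, hcombnorm]
  have hψne' := hψne
  revert hψne'
  generalize -(μ₁ * ‖x‖ ^ 2) / (1 + t) ^ 3 = W
  intro hWne
  generalize (∑ i, fderiv ℝ F (t, x) (0, EuclideanSpace.single i 1) ^ 2) = sQQ
  generalize (∑ i, fderiv ℝ (psi μ₁ n t) x (EuclideanSpace.single i 1) * fderiv ℝ F (t, x) (0, EuclideanSpace.single i 1)) = sRQ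
  generalize (∑ i, fderiv ℝ F (t, x) (0, EuclideanSpace.single i 1) * fderiv ℝ (fderiv ℝ F) (t, x) (1, 0) (0, EuclideanSpace.single i 1)) = sQM
  generalize (∑ i, fderiv ℝ (psi μ₁ n t) x (EuclideanSpace.single i 1) ^ 2) = sRR
  generalize (∑ i, fderiv ℝ (fderiv ℝ F) (t, x) (0, EuclideanSpace.single i 1) (0, EuclideanSpace.single i 1)) = sK
  generalize fderiv ℝ (fderiv ℝ F) (t, x) (1, 0) (1, 0) = vPp
  generalize fderiv ℝ F (t, x) (1, 0) = vP
  generalize Real.exp (2 * psi μ₁ n t x) = vE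
  generalize u t x = vA
  generalize -(2 * μ₂sq) / (1 + t) ^ 3 = vm
  field_simp
  ring
end

section
/- Let u be a C² solution of u_{tt} − Δu + (μ₁/(1+t))u_t + (μ₂²/(1+t)²)u = |u|^p with ψ(t,x) = μ₁|x|²/(2(1+t)²). Then ∂_t[ (e^{2ψ}/2)(u_t² + |∇u|² + m²(t)u²) − e^{2ψ}|u|^p u/(p+1) ] ≤ div(e^{2ψ}u_t∇u) − 2ψ_t e^{2ψ}|u|^p u/(p+1), pointwise in (t,x). -/
open MeasureTheory Real
open Filter

lemma hasDerivAt_abs_rpow_mul {p : ℝ} (hp : 0 < p) (y : ℝ) :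
    HasDerivAt (fun z : ℝ => |z| ^ p * z) ((p + 1) * |y| ^ p) y := by
  rcases lt_trichotomy y 0 with hy | hy | hy
  · have h1 : HasDerivAt (fun z : ℝ => -((-z) ^ (p + 1))) ((p + 1) * (-y) ^ p) y := by
      have h2 : HasDerivAt (fun z : ℝ => (-z) ^ (p + 1)) ((p + 1) * (-y) ^ (p + 1 - 1) * (-1)) y :=
        (Real.hasDerivAt_rpow_const (p := p + 1) (Or.inl (by linarith))).comp y (hasDerivAt_neg y)
      have := h2.fun_neg
      refine this.congr_deriv ?_
      rw [show p + 1 - 1 = p by ring]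
      ring
    have heq : (fun z : ℝ => |z| ^ p * z) =ᶠ[nhds y] (fun z : ℝ => -((-z) ^ (p + 1))) := by
      filter_upwards [Iio_mem_nhds hy] with z hz
      have hz' : (z : ℝ) < 0 := hz
      rw [abs_of_neg hz', Real.rpow_add_one (by linarith : (-z) ≠ 0)]
      ring
    rw [abs_of_neg hy]
    exact h1.congr_of_eventuallyEq heq
  · subst hy
    rw [hasDerivAt_iff_tendsto_slope]
    have h0 : |(0:ℝ)| ^ p = 0 := by simp [Real.zero_rpow hp.ne']
    have hcont : Tendsto (fun z : ℝ => |z| ^ p) (nhds 0) (nhds 0) := by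
      have h1 : Tendsto (fun z : ℝ => |z|) (nhds 0) (nhds 0) := by
        simpa using continuous_abs.tendsto (0 : ℝ)
      have h2 : Tendsto (fun w : ℝ => w ^ p) (nhds 0) (nhds 0) := by
        simpa [Real.zero_rpow hp.ne'] using (Real.continuousAt_rpow_const 0 p (Or.inr hp.le)).tendsto
      exact h2.comp h1
    have : Tendsto (fun z : ℝ => |z| ^ p) (nhdsWithin 0 {(0:ℝ)}ᶜ) (nhds 0) :=
      hcont.mono_left nhdsWithin_le_nhds
    rw [h0, mul_zero]
    refine this.congr' ?_
    filter_upwards [self_mem_nhdsWithin] with z hz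
    have hz' : z ≠ 0 := hz
    simp [slope, hz']
    field_simp
  · have h1 : HasDerivAt (fun z : ℝ => z ^ (p + 1)) ((p + 1) * y ^ p) y := by
      have := Real.hasDerivAt_rpow_const (x := y) (p := p + 1) (Or.inl hy.ne')
      rw [show p + 1 - 1 = p by ring] at this
      exact this
    have heq : (fun z : ℝ => |z| ^ p * z) =ᶠ[nhds y] (fun z : ℝ => z ^ (p + 1)) := by
      filter_upwards [Ioi_mem_nhds hy] with z hz
      have hz' : (0:ℝ) < z := hz
      rw [abs_of_pos hz', Real.rpow_add_one hz'.ne']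
    rw [abs_of_pos hy]
    exact h1.congr_of_eventuallyEq heq

set_option maxHeartbeats 2000000 in
/-- pointwise differential inequality for the weighted energy density
of a solution of the semi-linear equation with power non-linearity `|u|^p`. -/
theorem energy_inequality_semilinear (n : ℕ) (hn : 1 ≤ n) (μ₁ μ₂sq p : ℝ)
    (hμ₁ : 0 < μ₁) (hμ₂ : 0 ≤ μ₂sq) (hp : 1 < p)
    (u : ℝ → EuclideanSpace ℝ (Fin n) → ℝ)
    (hu : ContDiff ℝ 2 (fun q : ℝ × EuclideanSpace ℝ (Fin n) => u q.1 q.2))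
    (hsol : ∀ t ≥ (0:ℝ), ∀ x,
      deriv (fun s => ut u s x) t - lap (u t) x + (μ₁ / (1 + t)) * ut u t x
        + (μ₂sq / (1 + t) ^ 2) * u t x = |u t x| ^ p) :
    ∀ t ≥ (0:ℝ), ∀ x : EuclideanSpace ℝ (Fin n),
      deriv (fun s => Real.exp (2 * psi μ₁ n s x) / 2 *
            ((ut u s x) ^ 2 + ‖gradient (u s) x‖ ^ 2 + (μ₂sq / (1 + s) ^ 2) * (u s x) ^ 2)
          - Real.exp (2 * psi μ₁ n s x) * (|u s x| ^ p * u s x) / (p + 1)) t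
        ≤
      divg (fun y => (Real.exp (2 * psi μ₁ n t y) * ut u t y) • gradient (u t) y) x
        - 2 * deriv (fun s => psi μ₁ n s x) t * Real.exp (2 * psi μ₁ n t x) *
            (|u t x| ^ p * u t x) / (p + 1) := by
  intro t ht x
  set F := (fun q : ℝ × EuclideanSpace ℝ (Fin n) => u q.1 q.2) with hF
  have hFd : Differentiable ℝ F := hu.differentiable (by norm_num)
  have hf'c : ContDiff ℝ 1 (fderiv ℝ F) := hu.fderiv_right (by norm_num)
  have hf'd : Differentiable ℝ (fderiv ℝ F) := hf'c.differentiable (by norm_num)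
  have ht1 : (0:ℝ) < 1 + t := by linarith
  -- P1 : time derivative
  have hP1 : ∀ (s : ℝ) (y : EuclideanSpace ℝ (Fin n)),
      HasDerivAt (fun s' => u s' y) (fderiv ℝ F (s, y) (1, 0)) s := by
    intro s y
    have h := ((hFd (s, y)).hasFDerivAt).comp_hasDerivAt s
      ((hasDerivAt_id s).prodMk (hasDerivAt_const s y))
    simp at h
    exact h
  have hut : ∀ (s : ℝ) y, ut u s y = fderiv ℝ F (s, y) (1, 0) := fun s y => (hP1 s y).deriv
  -- P2 : spatial derivative
  have hP2 : ∀ (s : ℝ) (y : EuclideanSpace ℝ (Fin n)),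
      HasFDerivAt (u s) ((fderiv ℝ F (s, y)).comp
        (ContinuousLinearMap.inr ℝ ℝ (EuclideanSpace ℝ (Fin n)))) y := by
    intro s y
    exact ((hFd (s, y)).hasFDerivAt).comp y (hasFDerivAt_prodMk_right s y)
  have hfd_u : ∀ (s : ℝ) y v, fderiv ℝ (u s) y v = fderiv ℝ F (s, y) (0, v) := by
    intro s y v
    rw [(hP2 s y).fderiv]
    simp
  -- gradient coordinates
  have hgradco : ∀ (s : ℝ) y (i : Fin n),
      gradient (u s) y i = fderiv ℝ F (s, y) (0, EuclideanSpace.single i 1) := by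
    intro s y i
    have h1 : (inner ℝ (gradient (u s) y) (EuclideanSpace.single i (1:ℝ)) : ℝ)
        = fderiv ℝ (u s) y (EuclideanSpace.single i 1) := by
      rw [gradient]
      exact InnerProductSpace.toDual_symm_apply
    rw [EuclideanSpace.inner_single_right] at h1
    simpa [hfd_u] using h1
  have hgradnorm : ∀ (s : ℝ) y, ‖gradient (u s) y‖ ^ 2
      = ∑ i, (fderiv ℝ F (s, y) (0, EuclideanSpace.single i 1)) ^ 2 := by
    intro s y
    have h0 : ‖gradient (u s) y‖ ^ 2 = ∑ i, (gradient (u s) y i) ^ 2 := by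
      rw [EuclideanSpace.norm_eq, Real.sq_sqrt (by positivity)]
      simp [sq_abs]
    rw [h0]
    exact Finset.sum_congr rfl fun i _ => by rw [hgradco]
  -- P3 : time derivative of fderiv applied to fixed vector
  have hP3 : ∀ (w : ℝ × EuclideanSpace ℝ (Fin n)) (s : ℝ) (y : EuclideanSpace ℝ (Fin n)),
      HasDerivAt (fun s' => fderiv ℝ F (s', y) w)
        (fderiv ℝ (fderiv ℝ F) (s, y) (1, 0) w) s := by
    intro w s y
    have h1 : HasFDerivAt (fun q => fderiv ℝ F q w)
        ((fderiv ℝ (fderiv ℝ F) (s, y)).flip w) (s, y) := by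
      have h := (hf'd (s, y)).hasFDerivAt.clm_apply (hasFDerivAt_const w (s, y))
      simpa using h
    have h2 := h1.comp_hasDerivAt s ((hasDerivAt_id s).prodMk (hasDerivAt_const s y))
    simp at h2
    exact h2
  -- P4 : spatial fderiv of fderiv applied to fixed vector
  have hP4 : ∀ (w : ℝ × EuclideanSpace ℝ (Fin n)) (y : EuclideanSpace ℝ (Fin n)),
      HasFDerivAt (fun y' => fderiv ℝ F (t, y') w)
        (((fderiv ℝ (fderiv ℝ F) (t, y)).flip w).comp
          (ContinuousLinearMap.inr ℝ ℝ (EuclideanSpace ℝ (Fin n)))) y := by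
    intro w y
    have h1 : HasFDerivAt (fun q => fderiv ℝ F q w)
        ((fderiv ℝ (fderiv ℝ F) (t, y)).flip w) (t, y) := by
      have h := (hf'd (t, y)).hasFDerivAt.clm_apply (hasFDerivAt_const w (t, y))
      simpa using h
    exact h1.comp y (hasFDerivAt_prodMk_right t y)
  have hsymm := (hu.contDiffAt (x := (t, x))).isSymmSndFDerivAt (by simp)
  -- laplacian
  have hlap : lap (u t) x = ∑ i, fderiv ℝ (fderiv ℝ F) (t, x)
      (0, EuclideanSpace.single i 1) (0, EuclideanSpace.single i 1) := by
    unfold lap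
    refine Finset.sum_congr rfl fun i _ => ?_
    have hfun : (fun y => fderiv ℝ (u t) y (EuclideanSpace.single i 1))
        = fun y => fderiv ℝ F (t, y) (0, EuclideanSpace.single i 1) :=
      funext fun y => hfd_u t y _
    rw [hfun, (hP4 (0, EuclideanSpace.single i 1) x).fderiv]
    simp
  -- 1D derivatives of the coefficient functions
  have hpow2 : HasDerivAt (fun s : ℝ => (1 + s) ^ 2) (2 * (1 + t)) t := by
    have h1 : HasDerivAt (fun s : ℝ => 1 + s) 1 t := (hasDerivAt_id t).const_add 1
    have h2 := h1.pow 2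
    norm_num at h2
    exact h2
  have hψ : HasDerivAt (fun s => psi μ₁ n s x) (-(μ₁ * ‖x‖ ^ 2) / (1 + t) ^ 3) t := by
    have hne : (2 * (1 + t) ^ 2 : ℝ) ≠ 0 := by positivity
    have h2 : HasDerivAt (fun s : ℝ => 2 * (1 + s) ^ 2) (2 * (2 * (1 + t))) t :=
      hpow2.const_mul 2
    have h3 := (hasDerivAt_const t (μ₁ * ‖x‖ ^ 2)).div h2 hne
    refine h3.congr_deriv ?_
    field_simp
    ring
  have hm : HasDerivAt (fun s : ℝ => μ₂sq / (1 + s) ^ 2) (-(2 * μ₂sq) / (1 + t) ^ 3) t := by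
    have hne : ((1 + t) ^ 2 : ℝ) ≠ 0 := by positivity
    have h3 := (hasDerivAt_const t μ₂sq).div hpow2 hne
    refine h3.congr_deriv ?_
    field_simp
    ring
  have hexp : HasDerivAt (fun s => Real.exp (2 * psi μ₁ n s x))
      (Real.exp (2 * psi μ₁ n t x) * (2 * (-(μ₁ * ‖x‖ ^ 2) / (1 + t) ^ 3))) t :=
    (hψ.const_mul 2).exp
  have hN : HasDerivAt (fun s => |u s x| ^ p * u s x)
      ((p + 1) * |u t x| ^ p * fderiv ℝ F (t, x) (1, 0)) t := by
    have h := (hasDerivAt_abs_rpow_mul (by linarith : (0:ℝ) < p) (u t x)).comp t (hP1 t x)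
    exact h
  have hB : HasDerivAt (fun s => ‖gradient (u s) x‖ ^ 2)
      (2 * ∑ i, fderiv ℝ F (t, x) (0, EuclideanSpace.single i 1) *
        fderiv ℝ (fderiv ℝ F) (t, x) (1, 0) (0, EuclideanSpace.single i 1)) t := by
    have h2 : HasDerivAt (fun s => ∑ i, (fderiv ℝ F (s, x) (0, EuclideanSpace.single i 1)) ^ 2)
        (∑ i, 2 * fderiv ℝ F (t, x) (0, EuclideanSpace.single i 1) *
          fderiv ℝ (fderiv ℝ F) (t, x) (1, 0) (0, EuclideanSpace.single i 1)) t := by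
      refine HasDerivAt.fun_sum fun i _ => ?_
      have h := (hP3 (0, EuclideanSpace.single i 1) t x).pow 2
      refine h.congr_deriv ?_
      push_cast
      ring
    have h3 := h2.congr_of_eventuallyEq (Eventually.of_forall fun s => hgradnorm s x)
    refine h3.congr_deriv ?_
    rw [Finset.mul_sum]
    exact Finset.sum_congr rfl fun i _ => by ring
  have hutf : (fun s => ut u s x) = fun s => fderiv ℝ F (s, x) (1, 0) :=
    funext fun s => hut s x
  have ha : HasDerivAt (fun s => ut u s x)
      (fderiv ℝ (fderiv ℝ F) (t, x) (1, 0) (1, 0)) t := by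
    rw [hutf]; exact hP3 (1, 0) t x
  -- the equation
  have hsolx := hsol t ht x
  rw [ha.deriv, hlap, hut t x] at hsolx
  -- spatial derivative of the weight
  have hinner : HasFDerivAt (fun y : EuclideanSpace ℝ (Fin n) => (inner ℝ y y : ℝ))
      ((fderivInnerCLM ℝ (x, x)).comp
        ((ContinuousLinearMap.id ℝ (EuclideanSpace ℝ (Fin n))).prod
          (ContinuousLinearMap.id ℝ (EuclideanSpace ℝ (Fin n))))) x :=
    (hasFDerivAt_id x).inner (𝕜 := ℝ) (hasFDerivAt_id x)
  have hψs : HasFDerivAt (fun y => Real.exp (2 * psi μ₁ n t y))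
      (Real.exp ((μ₁ / (1 + t) ^ 2) * (inner ℝ x x : ℝ)) •
        ((μ₁ / (1 + t) ^ 2) • ((fderivInnerCLM ℝ (x, x)).comp
          ((ContinuousLinearMap.id ℝ (EuclideanSpace ℝ (Fin n))).prod
            (ContinuousLinearMap.id ℝ (EuclideanSpace ℝ (Fin n))))))) x := by
    have h1 := hinner.const_mul (μ₁ / (1 + t) ^ 2)
    have h2 := h1.exp
    refine h2.congr_of_eventuallyEq (Eventually.of_forall fun y => ?_)
    beta_reduce
    unfold psi
    rw [← real_inner_self_eq_norm_sq]
    congr 1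
    field_simp
  have hEψeq : Real.exp ((μ₁ / (1 + t) ^ 2) * (inner ℝ x x : ℝ)) = Real.exp (2 * psi μ₁ n t x) := by
    unfold psi
    rw [← real_inner_self_eq_norm_sq]
    congr 1
    field_simp
  -- divergence
  have hdivg : divg (fun y => (Real.exp (2 * psi μ₁ n t y) * ut u t y) • gradient (u t) y) x
      = ∑ i, ((2 * (μ₁ / (1 + t) ^ 2) * Real.exp (2 * psi μ₁ n t x) * fderiv ℝ F (t, x) (1, 0))
            * (x i * fderiv ℝ F (t, x) (0, EuclideanSpace.single i 1))
          + Real.exp (2 * psi μ₁ n t x) *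
            (fderiv ℝ F (t, x) (0, EuclideanSpace.single i 1) *
              fderiv ℝ (fderiv ℝ F) (t, x) (1, 0) (0, EuclideanSpace.single i 1))
          + (Real.exp (2 * psi μ₁ n t x) * fderiv ℝ F (t, x) (1, 0)) *
            fderiv ℝ (fderiv ℝ F) (t, x) (0, EuclideanSpace.single i 1)
              (0, EuclideanSpace.single i 1)) := by
    unfold divg
    refine Finset.sum_congr rfl fun i _ => ?_
    have hfun : (fun y => ((Real.exp (2 * psi μ₁ n t y) * ut u t y) • gradient (u t) y) i)
        = fun y => Real.exp (2 * psi μ₁ n t y) * fderiv ℝ F (t, y) (1, 0) *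
            fderiv ℝ F (t, y) (0, EuclideanSpace.single i 1) := by
      funext y
      have h1 := hgradco t y i
      have h2 := hut t y
      simp only [PiLp.smul_apply, smul_eq_mul]
      rw [h1, h2]
    rw [hfun]
    have hDi : HasFDerivAt (fun y => Real.exp (2 * psi μ₁ n t y) * fderiv ℝ F (t, y) (1, 0) *
        fderiv ℝ F (t, y) (0, EuclideanSpace.single i 1)) _ x :=
      (hψs.mul (hP4 (1, 0) x)).mul (hP4 (0, EuclideanSpace.single i 1) x)
    rw [hDi.fderiv]
    simp only [ContinuousLinearMap.add_apply, ContinuousLinearMap.smul_apply,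
      ContinuousLinearMap.comp_apply, ContinuousLinearMap.flip_apply,
      ContinuousLinearMap.inr_apply, ContinuousLinearMap.prod_apply,
      ContinuousLinearMap.id_apply, fderivInnerCLM_apply, smul_eq_mul,
      EuclideanSpace.inner_single_left, EuclideanSpace.inner_single_right,
      map_one, one_mul, mul_one, conj_trivial, Pi.mul_apply]
    rw [hEψeq, hsymm.eq (0, EuclideanSpace.single i 1) (1, 0)]
    ring
  have hX : (0:ℝ) < Real.exp (2 * psi μ₁ n t x) := Real.exp_pos _
  have hp1 : (0:ℝ) < p + 1 := by linarith
  -- clean time derivative of the nonlinear part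
  have hNd : HasDerivAt (fun s => Real.exp (2 * psi μ₁ n s x) * (|u s x| ^ p * u s x) / (p + 1))
      (2 * (-(μ₁ * ‖x‖ ^ 2) / (1 + t) ^ 3) * Real.exp (2 * psi μ₁ n t x) *
            (|u t x| ^ p * u t x) / (p + 1)
          + Real.exp (2 * psi μ₁ n t x) * (|u t x| ^ p * fderiv ℝ F (t, x) (1, 0))) t := by
    have h := (hexp.mul hN).div_const (p + 1)
    refine h.congr_deriv ?_
    beta_reduce
    field_simp
  -- clean time derivative of the quadratic part
  have hLd : HasDerivAt (fun s => Real.exp (2 * psi μ₁ n s x) / 2 *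
        ((ut u s x) ^ 2 + ‖gradient (u s) x‖ ^ 2 + (μ₂sq / (1 + s) ^ 2) * (u s x) ^ 2))
      ((-(μ₁ * ‖x‖ ^ 2) / (1 + t) ^ 3) * Real.exp (2 * psi μ₁ n t x) *
          ((fderiv ℝ F (t, x) (1, 0)) ^ 2 +
            (∑ i, (fderiv ℝ F (t, x) (0, EuclideanSpace.single i 1)) ^ 2) +
            (μ₂sq / (1 + t) ^ 2) * (u t x) ^ 2)
        + Real.exp (2 * psi μ₁ n t x) *
          (fderiv ℝ F (t, x) (1, 0) * fderiv ℝ (fderiv ℝ F) (t, x) (1, 0) (1, 0)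
            + (∑ i, fderiv ℝ F (t, x) (0, EuclideanSpace.single i 1) *
                fderiv ℝ (fderiv ℝ F) (t, x) (1, 0) (0, EuclideanSpace.single i 1))
            + (-(μ₂sq) / (1 + t) ^ 3) * (u t x) ^ 2
            + (μ₂sq / (1 + t) ^ 2) * (u t x) * fderiv ℝ F (t, x) (1, 0))) t := by
    have h := (hexp.div_const 2).mul (((ha.pow 2).add hB).add
      (hm.mul ((hP1 t x).pow 2)))
    refine h.congr_deriv ?_
    beta_reduce
    simp only [Pi.add_apply, Pi.mul_apply, Pi.pow_apply]
    rw [hut t x, hgradnorm t x]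
    push_cast
    ring
  have hbig := hLd.fun_sub hNd
  rw [hbig.deriv, hdivg, hψ.deriv]
  -- fold the divergence sum
  rw [show (∑ i, ((2 * (μ₁ / (1 + t) ^ 2) * Real.exp (2 * psi μ₁ n t x) * fderiv ℝ F (t, x) (1, 0))
            * (x i * fderiv ℝ F (t, x) (0, EuclideanSpace.single i 1))
          + Real.exp (2 * psi μ₁ n t x) *
            (fderiv ℝ F (t, x) (0, EuclideanSpace.single i 1) *
              fderiv ℝ (fderiv ℝ F) (t, x) (1, 0) (0, EuclideanSpace.single i 1))
          + (Real.exp (2 * psi μ₁ n t x) * fderiv ℝ F (t, x) (1, 0)) *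
            fderiv ℝ (fderiv ℝ F) (t, x) (0, EuclideanSpace.single i 1)
              (0, EuclideanSpace.single i 1)))
      = (2 * (μ₁ / (1 + t) ^ 2) * Real.exp (2 * psi μ₁ n t x) * fderiv ℝ F (t, x) (1, 0))
            * (∑ i, x i * fderiv ℝ F (t, x) (0, EuclideanSpace.single i 1))
        + Real.exp (2 * psi μ₁ n t x) *
            (∑ i, fderiv ℝ F (t, x) (0, EuclideanSpace.single i 1) *
              fderiv ℝ (fderiv ℝ F) (t, x) (1, 0) (0, EuclideanSpace.single i 1))
        + (Real.exp (2 * psi μ₁ n t x) * fderiv ℝ F (t, x) (1, 0)) *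
            (∑ i, fderiv ℝ (fderiv ℝ F) (t, x) (0, EuclideanSpace.single i 1)
              (0, EuclideanSpace.single i 1)) from by
    rw [Finset.sum_add_distrib, Finset.sum_add_distrib, ← Finset.mul_sum, ← Finset.mul_sum,
      ← Finset.mul_sum]]
  -- abbreviations
  set X := Real.exp (2 * psi μ₁ n t x) with hXdef
  set a0 := fderiv ℝ F (t, x) (1, 0) with ha0def
  set c0 := u t x with hc0def
  set G := ∑ i, (fderiv ℝ F (t, x) (0, EuclideanSpace.single i 1)) ^ 2 with hGdef
  set S2 := ∑ i, fderiv ℝ F (t, x) (0, EuclideanSpace.single i 1) *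
    fderiv ℝ (fderiv ℝ F) (t, x) (1, 0) (0, EuclideanSpace.single i 1) with hS2def
  set Sw := ∑ i, x i * fderiv ℝ F (t, x) (0, EuclideanSpace.single i 1) with hSwdef
  set Dl := ∑ i, fderiv ℝ (fderiv ℝ F) (t, x) (0, EuclideanSpace.single i 1)
    (0, EuclideanSpace.single i 1) with hDldef
  -- solve for the second time derivative
  have ha' : fderiv ℝ (fderiv ℝ F) (t, x) (1, 0) (1, 0)
      = Dl - μ₁ / (1 + t) * a0 - μ₂sq / (1 + t) ^ 2 * c0 + |c0| ^ p := by
    rw [hDldef, ha0def, hc0def]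
    linarith [hsolx]
  rw [ha', ← sub_nonpos]
  -- Cauchy-Schwarz
  have hxn : (∑ i, x i ^ 2) = ‖x‖ ^ 2 := by
    rw [EuclideanSpace.norm_eq, Real.sq_sqrt (by positivity)]
    simp [sq_abs]
  have hCS : Sw ^ 2 ≤ ‖x‖ ^ 2 * G := by
    rw [hSwdef, hGdef, ← hxn]
    exact Finset.sum_mul_sq_le_sq_mul_sq Finset.univ _ _
  -- the quadratic form is nonpositive
  have hQ : -(μ₁ * ‖x‖ ^ 2) / (1 + t) ^ 3 * (a0 ^ 2 + G + μ₂sq / (1 + t) ^ 2 * c0 ^ 2)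
      - μ₁ / (1 + t) * a0 ^ 2 + (-(μ₂sq) / (1 + t) ^ 3) * c0 ^ 2
      - 2 * (μ₁ / (1 + t) ^ 2) * a0 * Sw ≤ 0 := by
    have hGnn : (0:ℝ) ≤ G := hGdef ▸ Finset.sum_nonneg fun i _ => sq_nonneg _
    have hint1 : (0:ℝ) ≤ μ₁ / (1 + t) * (a0 + Sw / (1 + t)) ^ 2 :=
      mul_nonneg (div_nonneg hμ₁.le ht1.le) (sq_nonneg _)
    have hint2 : (0:ℝ) ≤ μ₁ / (1 + t) ^ 3 * (‖x‖ ^ 2 * G - Sw ^ 2) :=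
      mul_nonneg (div_nonneg hμ₁.le (by positivity)) (sub_nonneg.mpr hCS)
    have hint3 : (0:ℝ) ≤ μ₁ * ‖x‖ ^ 2 / (1 + t) ^ 3 * a0 ^ 2 :=
      mul_nonneg (div_nonneg (mul_nonneg hμ₁.le (sq_nonneg _)) (by positivity)) (sq_nonneg _)
    have hint4 : (0:ℝ) ≤ μ₁ * ‖x‖ ^ 2 / (1 + t) ^ 3 * (μ₂sq / (1 + t) ^ 2 * c0 ^ 2) :=
      mul_nonneg (div_nonneg (mul_nonneg hμ₁.le (sq_nonneg _)) (by positivity))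
        (mul_nonneg (div_nonneg hμ₂ (by positivity)) (sq_nonneg _))
    have hint5 : (0:ℝ) ≤ μ₂sq / (1 + t) ^ 3 * c0 ^ 2 :=
      mul_nonneg (div_nonneg hμ₂ (by positivity)) (sq_nonneg _)
    have hP : -(μ₁ * ‖x‖ ^ 2) * (1 + t) ^ 2 * (a0 ^ 2 + G) - μ₁ * ‖x‖ ^ 2 * μ₂sq * c0 ^ 2
        - μ₁ * (1 + t) ^ 4 * a0 ^ 2 - μ₂sq * (1 + t) ^ 2 * c0 ^ 2
        - 2 * μ₁ * (1 + t) ^ 3 * a0 * Sw ≤ 0 := by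
      nlinarith [mul_nonneg (mul_nonneg hμ₁.le (pow_nonneg ht1.le 2)) (sub_nonneg.mpr hCS),
        mul_nonneg hμ₁.le (sq_nonneg ((1 + t) ^ 2 * a0 + (1 + t) * Sw)),
        mul_nonneg (mul_nonneg (mul_nonneg hμ₁.le (pow_nonneg ht1.le 2)) (sq_nonneg ‖x‖))
          (sq_nonneg a0),
        mul_nonneg (mul_nonneg (mul_nonneg hμ₁.le (sq_nonneg ‖x‖)) hμ₂) (sq_nonneg c0),
        mul_nonneg (mul_nonneg hμ₂ (pow_nonneg ht1.le 2)) (sq_nonneg c0)]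
    have hQeq : -(μ₁ * ‖x‖ ^ 2) / (1 + t) ^ 3 * (a0 ^ 2 + G + μ₂sq / (1 + t) ^ 2 * c0 ^ 2)
        - μ₁ / (1 + t) * a0 ^ 2 + (-(μ₂sq) / (1 + t) ^ 3) * c0 ^ 2
        - 2 * (μ₁ / (1 + t) ^ 2) * a0 * Sw
        = (-(μ₁ * ‖x‖ ^ 2) * (1 + t) ^ 2 * (a0 ^ 2 + G) - μ₁ * ‖x‖ ^ 2 * μ₂sq * c0 ^ 2
          - μ₁ * (1 + t) ^ 4 * a0 ^ 2 - μ₂sq * (1 + t) ^ 2 * c0 ^ 2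
          - 2 * μ₁ * (1 + t) ^ 3 * a0 * Sw) / (1 + t) ^ 5 := by
      field_simp
      ring
    rw [hQeq]
    exact div_nonpos_of_nonpos_of_nonneg hP (by positivity)
  have hXQ : X * (-(μ₁ * ‖x‖ ^ 2) / (1 + t) ^ 3 * (a0 ^ 2 + G + μ₂sq / (1 + t) ^ 2 * c0 ^ 2)
      - μ₁ / (1 + t) * a0 ^ 2 + (-(μ₂sq) / (1 + t) ^ 3) * c0 ^ 2
      - 2 * (μ₁ / (1 + t) ^ 2) * a0 * Sw) ≤ 0 :=
    mul_nonpos_iff.mpr (Or.inl ⟨hX.le, hQ⟩)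
  nlinarith [hXQ]
end

section
/- (Blow-up for an ODI) Let K₀, K₁ > 0, α ≥ −2, p > 1, and F ∈ C²([0,T)) satisfy F''(t) + K₀(1+t)^{-1}F'(t) ≥ K₁(1+t)^α |F(t)|^p for all t ∈ [0,T). If F(0) > 0 and F'(0) > 0, then T < ∞, i.e., F cannot exist globally. -/
open Real Set Filter Topology

set_option maxHeartbeats 1000000 in
/-- blow-up for the ordinary differential inequality
`F'' + K₀(1+t)⁻¹F' ≥ K₁(1+t)^α |F|^p` with `F(0) > 0`, `F'(0) > 0`:
no such `F` exists globally on `[0,∞)`, i.e. the life-span is finite. -/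
theorem odi_blow_up (K₀ K₁ α p : ℝ) (hK₀ : 0 < K₀) (hK₁ : 0 < K₁)
    (hα : -2 ≤ α) (hp : 1 < p) (F : ℝ → ℝ) (hF : ContDiff ℝ 2 F)
    (hineq : ∀ t ≥ (0:ℝ),
      K₁ * (1 + t) ^ α * |F t| ^ p ≤ deriv (deriv F) t + K₀ * (1 + t)⁻¹ * deriv F t)
    (hF0 : 0 < F 0) (hF'0 : 0 < deriv F 0) : False := by
  -- preliminaries
  have hFd : Differentiable ℝ F := hF.differentiable (by norm_num)
  have hF1 : ContDiff ℝ 1 (deriv F) := by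
    have h2 : (2 : WithTop ℕ∞) = 1 + 1 := by norm_num
    rw [h2, contDiff_succ_iff_deriv] at hF
    exact hF.2.2
  have hF'd : Differentiable ℝ (deriv F) := hF1.differentiable (by norm_num)
  have hF'c : Continuous (deriv F) := hF'd.continuous
  have hFc : Continuous F := hFd.continuous
  -- Step 1 : the first derivative stays positive on [0,∞)
  have step1 : ∀ t, 0 ≤ t → 0 < deriv F t := by
    by_contra hcon
    push_neg at hcon
    obtain ⟨a, ha0, ha⟩ := hcon
    set B : Set ℝ := {t | 0 ≤ t ∧ deriv F t ≤ 0} with hBdef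
    have hBne : B.Nonempty := ⟨a, ha0, ha⟩
    have hBbdd : BddBelow B := ⟨0, fun x hx => hx.1⟩
    have hBclosed : IsClosed B := by
      have : B = Ici (0:ℝ) ∩ (deriv F) ⁻¹' (Iic 0) := rfl
      rw [this]
      exact isClosed_Ici.inter (isClosed_Iic.preimage hF'c)
    set t₀ := sInf B with ht₀def
    have hmem : t₀ ∈ B := hBclosed.csInf_mem hBne hBbdd
    have ht₀0 : 0 ≤ t₀ := hmem.1
    have ht₀pos : 0 < t₀ := by
      rcases eq_or_lt_of_le ht₀0 with h | h
      · exact absurd hmem.2 (not_le.mpr (h ▸ hF'0))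
      · exact h
    have hgood : ∀ s, 0 ≤ s → s < t₀ → 0 < deriv F s := by
      intro s hs0 hst
      by_contra hns
      push_neg at hns
      exact absurd (csInf_le hBbdd ⟨hs0, hns⟩) (not_le.mpr hst)
    have hFmono : StrictMonoOn F (Icc 0 t₀) := by
      apply strictMonoOn_of_deriv_pos (convex_Icc 0 t₀) hFc.continuousOn
      intro x hx
      rw [interior_Icc] at hx
      exact hgood x hx.1.le hx.2
    have hFlb : ∀ s ∈ Icc (0:ℝ) t₀, F 0 ≤ F s := by
      intro s hs
      rcases eq_or_lt_of_le hs.1 with h | h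
      · rw [← h]
      · exact (hFmono (left_mem_Icc.mpr ht₀0) hs h).le
    -- the auxiliary function M
    set M : ℝ → ℝ := fun t => (1 + t) ^ (K₀:ℝ) * deriv F t with hMdef
    have hMderiv : ∀ s ∈ Icc (0:ℝ) t₀, HasDerivAt M
        ((1 * K₀ * (1+s) ^ (K₀ - 1)) * deriv F s + (1+s) ^ (K₀:ℝ) * deriv (deriv F) s) s := by
      intro s hs
      have hs0 : (0:ℝ) < 1 + s := by linarith [hs.1]
      have h1 : HasDerivAt (fun t : ℝ => 1 + t) 1 s := (hasDerivAt_id s).const_add 1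
      have h2 : HasDerivAt (fun t : ℝ => (1 + t) ^ (K₀:ℝ)) (1 * K₀ * (1+s) ^ (K₀-1)) s :=
        h1.rpow_const (Or.inl (ne_of_gt hs0))
      exact h2.mul ((hF'd s).hasDerivAt)
    have hMpos : ∀ x ∈ interior (Icc (0:ℝ) t₀), 0 < deriv M x := by
      intro x hx
      rw [interior_Icc] at hx
      have hx' : x ∈ Icc (0:ℝ) t₀ := ⟨hx.1.le, hx.2.le⟩
      have hx0 : (0:ℝ) ≤ x := hx.1.le
      have hv : (0:ℝ) < 1 + x := by linarith
      rw [(hMderiv x hx').deriv]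
      have hFx : 0 < F x := lt_of_lt_of_le hF0 (hFlb x hx')
      have habs : |F x| = F x := abs_of_pos hFx
      have hIneq := hineq x hx0
      rw [habs] at hIneq
      have hpowsub : (1+x) ^ (K₀ - 1) = (1+x) ^ (K₀:ℝ) * (1+x)⁻¹ := by
        rw [Real.rpow_sub hv, Real.rpow_one]
        ring
      have hrpos : (0:ℝ) < (1+x) ^ (K₀:ℝ) := Real.rpow_pos_of_pos hv _
      have hrhs : 0 < K₁ * (1 + x) ^ α * F x ^ p := by
        have := Real.rpow_pos_of_pos hv α
        have := Real.rpow_pos_of_pos hFx p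
        positivity
      have key : 0 < deriv (deriv F) x + K₀ * (1 + x)⁻¹ * deriv F x := lt_of_lt_of_le hrhs hIneq
      rw [hpowsub]
      calc (0:ℝ) < (1+x) ^ (K₀:ℝ) * (deriv (deriv F) x + K₀ * (1 + x)⁻¹ * deriv F x) :=
            mul_pos hrpos key
        _ = 1 * K₀ * ((1 + x) ^ (K₀:ℝ) * (1 + x)⁻¹) * deriv F x
              + (1 + x) ^ (K₀:ℝ) * deriv (deriv F) x := by ring
    have hMcont : ContinuousOn M (Icc 0 t₀) := by
      apply ContinuousOn.mul _ hF'c.continuousOn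
      apply ContinuousOn.rpow_const ((continuous_const.add continuous_id).continuousOn)
      intro x hx
      exact Or.inl (ne_of_gt (by linarith [hx.1] : (0:ℝ) < 1 + x))
    have hMmono : StrictMonoOn M (Icc 0 t₀) :=
      strictMonoOn_of_deriv_pos (convex_Icc 0 t₀) hMcont hMpos
    have hM0 : M 0 = deriv F 0 := by
      simp [hMdef, Real.one_rpow]
    have hMt₀ : M t₀ ≤ 0 := by
      have hv : (0:ℝ) < 1 + t₀ := by linarith
      have : (0:ℝ) < (1+t₀) ^ (K₀:ℝ) := Real.rpow_pos_of_pos hv _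
      exact mul_nonpos_of_nonneg_of_nonpos this.le hmem.2
    have := hMmono (left_mem_Icc.mpr ht₀0) (right_mem_Icc.mpr ht₀0) ht₀pos
    rw [hM0] at this
    linarith
  -- F is bounded below by F 0 on [0,∞)
  have hFge : ∀ t, 0 ≤ t → F 0 ≤ F t := by
    intro t ht
    rcases eq_or_lt_of_le ht with h | h
    · rw [← h]
    · have hmono : StrictMonoOn F (Ici 0) := by
        apply strictMonoOn_of_deriv_pos (convex_Ici 0) hFc.continuousOn
        intro x hx
        rw [interior_Ici] at hx
        exact step1 x (le_of_lt hx)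
      exact (hmono self_mem_Ici ht h).le
  have hFpos : ∀ t, 0 ≤ t → 0 < F t := fun t ht => lt_of_lt_of_le hF0 (hFge t ht)
  -- choice of the small parameter ν
  set q : ℝ := (p+1)/2 with hqdef
  have hq1 : 1 < q := by rw [hqdef]; linarith
  set c₁ : ℝ := (F 0) ^ q with hc₁def
  set c₂ : ℝ := (F 0) ^ ((1-p)/2) with hc₂def
  have hc₁ : 0 < c₁ := Real.rpow_pos_of_pos hF0 _
  have hc₂ : 0 < c₂ := Real.rpow_pos_of_pos hF0 _
  set ν : ℝ := min (deriv F 0/(2*c₁)) (min (K₁/(2*K₀*c₂+1)) (Real.sqrt (K₁/(2*q)))) with hνdef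
  have hν0 : 0 < ν := by
    apply lt_min
    · positivity
    apply lt_min
    · positivity
    · apply Real.sqrt_pos.mpr; positivity
  have hb : ν * c₁ < deriv F 0 := by
    have h1 : ν ≤ deriv F 0/(2*c₁) := min_le_left _ _
    rw [le_div_iff₀ (by positivity : (0:ℝ) < 2*c₁)] at h1
    nlinarith [mul_pos hν0 hc₁]
  have hc : K₀ * ν * c₂ + ν^2 * q < K₁ := by
    have h2 : ν ≤ K₁/(2*K₀*c₂+1) := le_trans (min_le_right _ _) (min_le_left _ _)
    have h3 : ν ≤ Real.sqrt (K₁/(2*q)) := le_trans (min_le_right _ _) (min_le_right _ _)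
    have h4 : ν^2 ≤ K₁/(2*q) := by
      have hs := Real.sq_sqrt (show (0:ℝ) ≤ K₁/(2*q) by positivity)
      nlinarith [Real.sqrt_nonneg (K₁/(2*q))]
    rw [le_div_iff₀ (by positivity : (0:ℝ) < 2*K₀*c₂+1)] at h2
    rw [le_div_iff₀ (by positivity : (0:ℝ) < 2*q)] at h4
    nlinarith [hν0, mul_pos hK₀ hc₂, mul_pos hν0 (mul_pos hK₀ hc₂)]
  clear_value ν
  -- Step 2 : F' t > ν (1+t)⁻¹ F(t)^q on [0,∞)
  set H : ℝ → ℝ := fun t => deriv F t - ν * ((1+t)⁻¹ * (F t) ^ q) with hHdef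
  have hHcont : ∀ t, 0 ≤ t → ContinuousAt H t := by
    intro t ht
    have h1 : ContinuousAt (fun s : ℝ => (1+s)⁻¹) t :=
      (continuousAt_const.add continuousAt_id).inv₀ (ne_of_gt (by linarith : (0:ℝ) < 1 + t))
    have h2 : ContinuousAt (fun s => (F s) ^ q) t :=
      (hFc.continuousAt).rpow_const (Or.inl (ne_of_gt (hFpos t ht)))
    exact (hF'c.continuousAt).sub (continuousAt_const.mul (h1.mul h2))
  have hH0 : 0 < H 0 := by
    have : H 0 = deriv F 0 - ν * ((1+0:ℝ)⁻¹ * (F 0) ^ q) := rfl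
    rw [this]
    rw [← hc₁def]
    norm_num
    linarith [hb]
  have step2 : ∀ t, 0 ≤ t → 0 < H t := by
    by_contra hcon
    push_neg at hcon
    obtain ⟨a, ha0, ha⟩ := hcon
    set B₂ : Set ℝ := {t | 0 ≤ t ∧ H t ≤ 0} with hB₂def
    have hBne : B₂.Nonempty := ⟨a, ha0, ha⟩
    have hBbdd : BddBelow B₂ := ⟨0, fun x hx => hx.1⟩
    set t₀ := sInf B₂ with ht₀def
    have ht₀0 : 0 ≤ t₀ := le_csInf hBne (fun x hx => hx.1)
    have hgood : ∀ s, 0 ≤ s → s < t₀ → 0 < H s := by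
      intro s hs0 hst
      by_contra hns
      push_neg at hns
      exact absurd (csInf_le hBbdd ⟨hs0, hns⟩) (not_le.mpr hst)
    have hHt₀le : H t₀ ≤ 0 := by
      by_contra hpos
      push_neg at hpos
      have hev : ∀ᶠ s in nhds t₀, 0 < H s := continuousAt_const.eventually_lt (hHcont t₀ ht₀0) hpos
      obtain ⟨δ, hδ0, hδ⟩ := Metric.eventually_nhds_iff.mp hev
      have hlb : ∀ b ∈ B₂, t₀ + δ/2 ≤ b := by
        intro b hb
        by_contra hlt
        push_neg at hlt
        have hb0 : t₀ ≤ b := csInf_le hBbdd hb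
        have : 0 < H b := by
          apply hδ
          rw [Real.dist_eq, abs_of_nonneg (by linarith)]
          linarith
        linarith [hb.2]
      have := le_csInf hBne hlb
      linarith
    have ht₀pos : 0 < t₀ := by
      rcases eq_or_lt_of_le ht₀0 with h | h
      · exfalso; rw [← h] at hHt₀le; linarith
      · exact h
    have hHt₀ge : 0 ≤ H t₀ :=
      ge_of_tendsto ((hHcont t₀ ht₀0).mono_left nhdsWithin_le_nhds) (by
        filter_upwards [Ioo_mem_nhdsLT_of_mem (show t₀ ∈ Ioc 0 t₀ from ⟨ht₀pos, le_rfl⟩)] with s hs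
        exact (hgood s hs.1.le hs.2).le)
    have hHt₀ : H t₀ = 0 := le_antisymm hHt₀le hHt₀ge
    set v : ℝ := 1 + t₀ with hvdef
    have hv0 : (0:ℝ) < v := by rw [hvdef]; linarith
    have hv1 : (1:ℝ) ≤ v := by rw [hvdef]; linarith
    set w : ℝ := v⁻¹ with hwdef
    have hw0 : 0 < w := inv_pos.mpr hv0
    set A : ℝ := F t₀ with hAdef
    have hA0 : 0 < A := hFpos t₀ ht₀0
    have hAge : F 0 ≤ A := hFge t₀ ht₀0
    have hFt' : deriv F t₀ = ν * (w * A ^ q) := by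
      have h : H t₀ = deriv F t₀ - ν * (w * A ^ q) := rfl
      rw [hHt₀] at h
      linarith
    -- H has a derivative at t₀
    have h1 : HasDerivAt (fun t : ℝ => 1 + t) 1 t₀ := (hasDerivAt_id t₀).const_add 1
    have hinv : HasDerivAt (fun t : ℝ => (1+t)⁻¹) (-1 / v^2) t₀ := h1.inv (ne_of_gt hv0)
    have hrp : HasDerivAt (fun t => (F t) ^ q) (deriv F t₀ * q * A ^ (q-1)) t₀ :=
      (hFd t₀).hasDerivAt.rpow_const (Or.inl (ne_of_gt hA0))
    have hHD : HasDerivAt H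
        (deriv (deriv F) t₀ - ν * (-1/v^2 * A^q + w * (deriv F t₀ * q * A^(q-1)))) t₀ :=
      ((hF'd t₀).hasDerivAt).sub ((hinv.mul hrp).const_mul ν)
    -- this derivative is nonpositive (H decreases to 0 from the left)
    have hDle : deriv (deriv F) t₀ - ν * (-1/v^2 * A^q + w * (deriv F t₀ * q * A^(q-1))) ≤ 0 := by
      have htends := hasDerivAt_iff_tendsto_slope.mp hHD
      have h2 := htends.mono_left (nhdsWithin_mono t₀ (fun x (hx : x ∈ Iio t₀) => ne_of_lt hx))
      refine le_of_tendsto h2 ?_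
      filter_upwards [Ioo_mem_nhdsLT_of_mem (show t₀ ∈ Ioc 0 t₀ from ⟨ht₀pos, le_rfl⟩)] with s hs
      rw [slope_def_field, hHt₀]
      apply div_nonpos_of_nonneg_of_nonpos
      · rw [sub_zero]; exact (hgood s hs.1.le hs.2).le
      · linarith [hs.2]
    -- but the derivative is positive : contradiction
    have habs : |A| = A := abs_of_pos hA0
    have hIneq := hineq t₀ ht₀0
    rw [← hvdef, ← hwdef, habs, hFt'] at hIneq
    have hApos : 0 < A ^ p := Real.rpow_pos_of_pos hA0 p
    have hAqpos : 0 < A ^ q := Real.rpow_pos_of_pos hA0 q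
    have hvα : w^2 ≤ v ^ α := by
      have hle : v ^ (-2:ℝ) ≤ v ^ α := Real.rpow_le_rpow_of_exponent_le hv1 hα
      have heq : v ^ (-2:ℝ) = w^2 := by
        rw [show (-2:ℝ) = -((2:ℕ):ℝ) by norm_num, Real.rpow_neg hv0.le, Real.rpow_natCast,
          hwdef, inv_pow]
      linarith
    have hqq : A ^ (q-1) * A ^ q = A ^ p := by
      rw [← Real.rpow_add hA0]
      congr 1
      rw [hqdef]; ring
    have hqp : A ^ q ≤ A ^ p * c₂ := by
      have h1' : A ^ q = A ^ p * A ^ ((1-p)/2) := by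
        rw [← Real.rpow_add hA0]
        congr 1
        rw [hqdef]; ring
      have h2' : A ^ ((1-p)/2) ≤ c₂ := by
        rw [hc₂def]
        exact Real.rpow_le_rpow_of_nonpos hF0 hAge (by linarith)
      rw [h1']
      exact mul_le_mul_of_nonneg_left h2' hApos.le
    have hww : (-1 : ℝ)/v^2 = -(w^2) := by
      rw [hwdef, inv_pow]
      rw [neg_div, one_div]
    clear_value A w v t₀
    have hDpos : 0 < deriv (deriv F) t₀ - ν * (-1/v^2 * A^q + w * (deriv F t₀ * q * A^(q-1))) := by
      rw [hFt', hww]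
      have e1 : ν * (-(w^2) * A^q + w * (ν * (w * A^q) * q * A^(q-1)))
          = -(ν * (w^2 * A^q)) + ν^2*q*w^2*(A^(q-1) * A^q) := by ring
      rw [e1, hqq]
      have e2 : K₀ * w * (ν * (w * A^q)) = K₀ * ν * w^2 * (A^q) := by ring
      rw [e2] at hIneq
      have hKα : K₁ * (w^2 * A^p) ≤ K₁ * (v^α * A^p) :=
        mul_le_mul_of_nonneg_left (mul_le_mul_of_nonneg_right hvα hApos.le) hK₁.le
      have hqp' : K₀ * ν * w^2 * (A^q) ≤ K₀ * ν * w^2 * (A^p * c₂) :=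
        mul_le_mul_of_nonneg_left hqp (mul_nonneg (mul_nonneg hK₀.le hν0.le) (sq_nonneg w))
      have hkey : 0 < w^2 * A^p * (K₁ - (K₀*ν*c₂ + ν^2*q)) :=
        mul_pos (mul_pos (pow_pos hw0 2) hApos) (sub_pos.mpr hc)
      have hnn : 0 ≤ ν * (w^2 * A^q) := mul_nonneg hν0.le (mul_nonneg (sq_nonneg w) hAqpos.le)
      linarith only [hIneq, hKα, hqp', hkey, hnn]
    linarith
  -- Step 3 : contradiction via the decreasing auxiliary function ψ
  set T : ℝ := Real.exp ((F 0)^(1-q) / ((q-1)*ν)) with hTdef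
  have hT0 : 0 < T := Real.exp_pos _
  set ψ : ℝ → ℝ := fun t => (F t)^(1-q) + (q-1)*ν*Real.log (1+t) with hψdef
  have hψderiv : ∀ s, 0 ≤ s →
      HasDerivAt ψ (deriv F s * (1-q) * (F s)^((1-q)-1) + (q-1)*ν*(1/(1+s))) s := by
    intro s hs
    have hs0 : (0:ℝ) < 1 + s := by linarith
    have h1 : HasDerivAt (fun t : ℝ => 1 + t) 1 s := (hasDerivAt_id s).const_add 1
    have hlog : HasDerivAt (fun t : ℝ => Real.log (1+t)) (1/(1+s)) s := h1.log (ne_of_gt hs0)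
    have hrp : HasDerivAt (fun t => (F t)^(1-q)) (deriv F s * (1-q) * (F s)^((1-q)-1)) s :=
      (hFd s).hasDerivAt.rpow_const (Or.inl (ne_of_gt (hFpos s hs)))
    exact hrp.add (hlog.const_mul ((q-1)*ν))
  have hψneg : ∀ s, 0 ≤ s →
      deriv F s * (1-q) * (F s)^((1-q)-1) + (q-1)*ν*(1/(1+s)) < 0 := by
    intro s hs
    have hs0 : (0:ℝ) < 1+s := by linarith
    have hFs := hFpos s hs
    have hHs := step2 s hs
    have hHs' : 0 < deriv F s - ν * ((1+s)⁻¹ * (F s) ^ q) := hHs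
    have hid : (F s)^((1-q)-1) * (F s)^q = 1 := by
      rw [← Real.rpow_add hFs, show (1-q)-1+q = (0:ℝ) by ring, Real.rpow_zero]
    have hx : 0 < (F s)^((1-q)-1) := Real.rpow_pos_of_pos hFs _
    have hid2 : (q-1)*ν*((1+s)⁻¹)*((F s)^((1-q)-1)*(F s)^q) = (q-1)*ν*((1+s)⁻¹) := by
      rw [hid]; ring
    have hmul := mul_pos (mul_pos (by linarith : (0:ℝ) < q-1) hx) hHs'
    have hinv1 : (1:ℝ)/(1+s) = (1+s)⁻¹ := one_div _
    rw [hinv1]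
    nlinarith [hmul, hid2]
  have hanti : StrictAntiOn ψ (Icc 0 T) := by
    apply strictAntiOn_of_deriv_neg (convex_Icc 0 T)
    · apply ContinuousOn.add
      · apply ContinuousOn.rpow_const hFc.continuousOn
        intro x hx
        exact Or.inl (ne_of_gt (hFpos x hx.1))
      · apply ContinuousOn.mul continuousOn_const
        apply ContinuousOn.log ((continuous_const.add continuous_id).continuousOn)
        intro x hx
        exact ne_of_gt (by linarith [hx.1] : (0:ℝ) < 1 + x)
    · intro x hx
      rw [interior_Icc] at hx
      rw [(hψderiv x hx.1.le).deriv]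
      exact hψneg x hx.1.le
  have hlt : ψ T < ψ 0 := hanti (left_mem_Icc.mpr hT0.le) (right_mem_Icc.mpr hT0.le) hT0
  have hψ0 : ψ 0 = (F 0)^(1-q) := by
    have : ψ 0 = (F 0)^(1-q) + (q-1)*ν*Real.log (1+0) := rfl
    rw [this]
    norm_num
  have hψT : ψ T = (F T)^(1-q) + (q-1)*ν*Real.log (1+T) := rfl
  have hlog2 : (F 0)^(1-q) / ((q-1)*ν) < Real.log (1+T) := by
    have h1 : Real.log T = (F 0)^(1-q) / ((q-1)*ν) := Real.log_exp _
    have h2 : Real.log T < Real.log (1+T) := Real.log_lt_log hT0 (by linarith)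
    linarith
  have hqν : 0 < (q-1)*ν := mul_pos (by linarith) hν0
  have hFT : 0 < (F T)^(1-q) := Real.rpow_pos_of_pos (hFpos T hT0.le) _
  have hfin := (div_lt_iff₀ hqν).mp hlog2
  rw [hψ0] at hlt
  rw [hψT] at hlt
  nlinarith [hfin, hFT, hlt]
end

section
/- (Comparison lemma) Let K₀ > 0 and F, G ∈ C²([0,T₀)) with F(0) = G(0), F'(0) > G'(0), and suppose (F''(t) − G''(t)) + K₀(1+t)^{-1}(F'(t) − G'(t)) ≥ 0 whenever F(t) ≥ G(t) ≥ 0 on an interval. If additionally F'' + K₀(1+t)^{-1}F' ≥ K₁(1+t)^α|F|^p and G'' + K₀(1+t)^{-1}G' ≤ K₁(1+t)^α G^p with G > 0 increasing, then F(t) > G(t) for all t ∈ (0,T₀). -/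
open Real

/-- comparison lemma for the ordinary differential inequalities
satisfied by `F` and the subsolution `G`. -/
theorem odi_comparison (K₀ K₁ α p T₀ : ℝ) (hK₀ : 0 < K₀) (hK₁ : 0 < K₁) (hp : 1 < p)
    (hT₀ : 0 < T₀) (F G : ℝ → ℝ) (hF : ContDiff ℝ 2 F) (hG : ContDiff ℝ 2 G)
    (h0 : F 0 = G 0) (h0' : deriv G 0 < deriv F 0)
    (hdiff : ∀ t ∈ Set.Ico (0:ℝ) T₀, 0 ≤ G t → G t ≤ F t →
      0 ≤ (deriv (deriv F) t - deriv (deriv G) t)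
        + K₀ * (1 + t)⁻¹ * (deriv F t - deriv G t))
    (hFineq : ∀ t ∈ Set.Ico (0:ℝ) T₀,
      K₁ * (1 + t) ^ α * |F t| ^ p ≤ deriv (deriv F) t + K₀ * (1 + t)⁻¹ * deriv F t)
    (hGineq : ∀ t ∈ Set.Ico (0:ℝ) T₀,
      deriv (deriv G) t + K₀ * (1 + t)⁻¹ * deriv G t ≤ K₁ * (1 + t) ^ α * G t ^ p)
    (hGpos : ∀ t ∈ Set.Ico (0:ℝ) T₀, 0 < G t)
    (hGmono : MonotoneOn G (Set.Ico (0:ℝ) T₀)) :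
    ∀ t ∈ Set.Ioo (0:ℝ) T₀, G t < F t := by
  have hF2 : ContDiff ℝ (1+1) F := by exact_mod_cast hF
  have hG2 : ContDiff ℝ (1+1) G := by exact_mod_cast hG
  have hF1 : ContDiff ℝ 1 (deriv F) := (contDiff_succ_iff_deriv.mp hF2).2.2
  have hG1 : ContDiff ℝ 1 (deriv G) := (contDiff_succ_iff_deriv.mp hG2).2.2
  have hFd : Differentiable ℝ F := hF.differentiable (by norm_num)
  have hGd : Differentiable ℝ G := hG.differentiable (by norm_num)
  have hF'd : Differentiable ℝ (deriv F) := hF1.differentiable one_ne_zero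
  have hG'd : Differentiable ℝ (deriv G) := hG1.differentiable one_ne_zero
  have hcontH' : Continuous (fun s => deriv F s - deriv G s) :=
    (hF'd.continuous.sub hG'd.continuous)
  set H : ℝ → ℝ := fun s => F s - G s with hHdef
  have hcontH : Continuous H := hFd.continuous.sub hGd.continuous
  have hH0 : H 0 = 0 := by simp [hHdef, h0]
  have hHderiv : ∀ x : ℝ, deriv H x = deriv F x - deriv G x := fun x =>
    deriv_sub (hFd x) (hGd x)
  -- derivative of the weighted function φ
  have hφ : ∀ s : ℝ, 0 ≤ s → HasDerivAt (fun u => (1+u) ^ K₀ * (deriv F u - deriv G u))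
      ((1+s) ^ K₀ * ((deriv (deriv F) s - deriv (deriv G) s)
        + K₀ * (1+s)⁻¹ * (deriv F s - deriv G s))) s := by
    intro s hs
    have h1s : (0:ℝ) < 1 + s := by linarith
    have hb : HasDerivAt (fun u : ℝ => 1 + u) 1 s := by
      simpa using (hasDerivAt_id s).const_add 1
    have hr : HasDerivAt (fun u : ℝ => (1+u) ^ K₀) (K₀ * (1+s) ^ (K₀ - 1)) s := by
      have := (Real.hasDerivAt_rpow_const (x := 1+s) (p := K₀) (Or.inl h1s.ne')).comp s hb
      exact this.congr_deriv (mul_one _)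
    have hv : HasDerivAt (fun u => deriv F u - deriv G u)
        (deriv (deriv F) s - deriv (deriv G) s) s :=
      ((hF'd s).hasDerivAt.sub (hG'd s).hasDerivAt)
    have hmul := hr.mul hv
    refine hmul.congr_deriv ?_
    have hpow : (1+s) ^ (K₀ - 1) = (1+s) ^ K₀ * (1+s)⁻¹ := by
      rw [Real.rpow_sub h1s, Real.rpow_one, div_eq_mul_inv]
    rw [hpow]; ring
  have hφcont : Continuous (fun u : ℝ => (1+u) ^ K₀) →
      True := fun _ => trivial
  intro t ht
  obtain ⟨ht0, htT⟩ := ht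
  by_contra hcon
  push_neg at hcon
  -- hcon : F t ≤ G t
  set B : Set ℝ := {s | s ∈ Set.Icc (0:ℝ) t ∧ ∀ u ∈ Set.Icc (0:ℝ) s, 0 ≤ H u} with hBdef
  have h0B : (0:ℝ) ∈ B := by
    refine ⟨⟨le_rfl, ht0.le⟩, ?_⟩
    intro u hu
    have : u = 0 := le_antisymm hu.2 hu.1
    simp [this, hH0]
  have hBdd : BddAbove B := ⟨t, fun s hs => hs.1.2⟩
  set t₀ := sSup B with ht₀def
  have ht₀0 : 0 ≤ t₀ := le_csSup hBdd h0B
  have ht₀t : t₀ ≤ t := csSup_le ⟨0, h0B⟩ (fun s hs => hs.1.2)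
  have hHnn' : ∀ u, 0 ≤ u → u < t₀ → 0 ≤ H u := by
    intro u hu0 hut
    obtain ⟨s, hsB, hus⟩ := exists_lt_of_lt_csSup ⟨0, h0B⟩ hut
    exact hsB.2 u ⟨hu0, hus.le⟩
  have hHt₀ : 0 ≤ H t₀ := by
    rcases eq_or_lt_of_le ht₀0 with h | h
    · rw [← h]; rw [hH0]
    · have htd : Filter.Tendsto H (nhdsWithin t₀ (Set.Iio t₀)) (nhds (H t₀)) :=
        hcontH.continuousAt.tendsto.mono_left nhdsWithin_le_nhds
      refine ge_of_tendsto htd ?_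
      filter_upwards [Ioo_mem_nhdsLT_of_mem (show t₀ ∈ Set.Ioc (0:ℝ) t₀ from ⟨h, le_rfl⟩)]
        with u hu
      exact hHnn' u hu.1.le hu.2
  have hHnn : ∀ u ∈ Set.Icc (0:ℝ) t₀, 0 ≤ H u := by
    intro u hu
    rcases lt_or_eq_of_le hu.2 with h | h
    · exact hHnn' u hu.1 h
    · rw [h]; exact hHt₀
  -- positivity of deriv F - deriv G on [0, t₀]
  have key : ∀ s ∈ Set.Icc (0:ℝ) t₀, 0 < deriv F s - deriv G s := by
    have hmono : MonotoneOn (fun u => (1+u) ^ K₀ * (deriv F u - deriv G u))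
        (Set.Icc (0:ℝ) t₀) := by
      apply monotoneOn_of_deriv_nonneg (convex_Icc _ _)
      · apply ContinuousOn.mul _ hcontH'.continuousOn
        exact ContinuousOn.rpow_const
          ((continuous_const.add continuous_id).continuousOn)
          (fun x hx => Or.inl (by intro hc; have := hx.1; linarith [hc ▸ (show (0:ℝ) ≤ x from hx.1)]))
      · intro x hx
        rw [interior_Icc] at hx
        exact ((hφ x hx.1.le).differentiableAt).differentiableWithinAt
      · intro x hx
        rw [interior_Icc] at hx
        rw [(hφ x hx.1.le).deriv]
        have hxT : x ∈ Set.Ico (0:ℝ) T₀ := ⟨hx.1.le, by linarith [hx.2, ht₀t, htT]⟩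
        have hGx := hGpos x hxT
        have hHx := hHnn x ⟨hx.1.le, hx.2.le⟩
        have hGF : G x ≤ F x := by
          have : 0 ≤ F x - G x := hHx
          linarith
        have hd := hdiff x hxT hGx.le hGF
        have hpow : (0:ℝ) < (1+x) ^ K₀ :=
          Real.rpow_pos_of_pos (by linarith [hx.1]) _
        exact mul_nonneg hpow.le hd
    intro s hs
    have h1 := hmono (Set.left_mem_Icc.mpr ht₀0) hs hs.1
    have hφ0 : ((1:ℝ)+0) ^ K₀ * (deriv F 0 - deriv G 0) = deriv F 0 - deriv G 0 := by
      norm_num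
    have hpos : 0 < (1+s) ^ K₀ * (deriv F s - deriv G s) := by
      calc (0:ℝ) < deriv F 0 - deriv G 0 := sub_pos.mpr h0'
        _ = ((1:ℝ)+0) ^ K₀ * (deriv F 0 - deriv G 0) := hφ0.symm
        _ ≤ _ := h1
    have hpow : (0:ℝ) < (1+s) ^ K₀ :=
      Real.rpow_pos_of_pos (by linarith [hs.1]) _
    rcases mul_pos_iff.mp hpos with ⟨_, h⟩ | ⟨h, _⟩
    · exact h
    · linarith
  rcases eq_or_lt_of_le ht₀t with heq | hlt
  · -- t₀ = t : H strictly increasing on [0,t], so H t > 0, contradiction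
    have hsm : StrictMonoOn H (Set.Icc (0:ℝ) t) := by
      apply strictMonoOn_of_deriv_pos (convex_Icc _ _) hcontH.continuousOn
      intro x hx
      rw [interior_Icc] at hx
      rw [hHderiv]
      exact key x ⟨hx.1.le, by rw [heq]; exact hx.2.le⟩
    have := hsm (Set.left_mem_Icc.mpr ht0.le) (Set.right_mem_Icc.mpr ht0.le) ht0
    rw [hH0] at this
    have : G t < F t := by simpa [hHdef, sub_pos] using this
    linarith
  · -- t₀ < t : extend positivity of deriv beyond t₀, contradict sSup
    have hks : 0 < deriv F t₀ - deriv G t₀ := key t₀ ⟨ht₀0, le_rfl⟩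
    have hopen : {s : ℝ | 0 < deriv F s - deriv G s} ∈ nhds t₀ :=
      (isOpen_lt continuous_const hcontH').mem_nhds hks
    obtain ⟨ε, hε, hball⟩ := Metric.mem_nhds_iff.mp hopen
    set δ := min (ε/2) (t - t₀) with hδdef
    have hδ0 : 0 < δ := lt_min (by linarith) (by linarith)
    have hδε : δ < ε := lt_of_le_of_lt (min_le_left _ _) (by linarith)
    have hδt : t₀ + δ ≤ t := by
      have := min_le_right (ε/2) (t - t₀); simp only [hδdef]; linarith
    have hpos' : ∀ u ∈ Set.Icc t₀ (t₀+δ), 0 < deriv F u - deriv G u := by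
      intro u hu
      apply hball
      rw [Metric.mem_ball, Real.dist_eq, abs_lt]
      constructor <;> [linarith [hu.1]; linarith [hu.2]]
    have hmono2 : MonotoneOn H (Set.Icc t₀ (t₀+δ)) := by
      apply monotoneOn_of_deriv_nonneg (convex_Icc _ _) hcontH.continuousOn
      · exact fun x _ => ((hFd x).sub (hGd x)).differentiableWithinAt
      · intro x hx
        rw [interior_Icc] at hx
        rw [hHderiv]
        exact (hpos' x ⟨hx.1.le, hx.2.le⟩).le
    have hmem : t₀ + δ ∈ B := by
      refine ⟨⟨by linarith, hδt⟩, ?_⟩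
      intro u hu
      rcases le_total u t₀ with h | h
      · exact hHnn u ⟨hu.1, h⟩
      · calc (0:ℝ) ≤ H t₀ := hHt₀
          _ ≤ H u := hmono2 (Set.left_mem_Icc.mpr (by linarith)) ⟨h, hu.2⟩ h
    have : t₀ + δ ≤ t₀ := le_csSup hBdd hmem
    linarith
end
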